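/- arXiv:1311.4048 — 7 statements merged into one kernel-verified Lean document; each statement's English description precedes it below -/
import Mathlib

section
/- Let P₁, P₂ be groups, G an abelian group, and φ : P₁ → G, ψ : P₂ → G surjective group homomorphisms. Let F = P₁ × P₂ and let K be the kernel of the homomorphism F → G given by (p,q) ↦ φ(p) − ψ(q). Then the triple commutator subgroup ⁅F, ⁅F, F⁆⁆ is contained in ⁅K, K⁆. -/
open scoped commutatorElement

/-- With `F = P₁ × P₂` and `K` the kernel of `(p,q) ↦ φ(p) - ψ(q)`,
the triple commutator subgroup `⁅F, ⁅F, F⁆⁆` is contained in `⁅K, K⁆`. -/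
theorem triple_commutator_le_commutator_of_kernel
    {P₁ P₂ G : Type*} [Group P₁] [Group P₂] [CommGroup G]
    (φ : P₁ →* G) (ψ : P₂ →* G)
    (hφ : Function.Surjective φ) (hψ : Function.Surjective ψ)
    (K : Subgroup (P₁ × P₂))
    (hK : ∀ p q, (p, q) ∈ K ↔ φ p = ψ q) :
    ⁅(⊤ : Subgroup (P₁ × P₂)), ⁅(⊤ : Subgroup (P₁ × P₂)), (⊤ : Subgroup (P₁ × P₂))⁆⁆ ≤
      ⁅K, K⁆ := by
  have memK : ∀ p q, φ p = ψ q → (p, q) ∈ K := fun p q h => (hK p q).mpr h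
  have key1 : ∀ (p a : P₁), φ a = 1 → ((⁅p, a⁆, (1 : P₂)) : P₁ × P₂) ∈ ⁅K, K⁆ := by
    intro p a ha
    obtain ⟨q', hq'⟩ := hψ (φ p)
    have h := Subgroup.commutator_mem_commutator (memK p q' hq'.symm)
      (memK a 1 (by simp [ha]))
    have heq : (⁅((p, q') : P₁ × P₂), ((a, 1) : P₁ × P₂)⁆) = ((⁅p, a⁆, (1 : P₂)) : P₁ × P₂) := by
      simp [commutatorElement_def, Prod.ext_iff, mul_assoc]
    rwa [heq] at h
  have key2 : ∀ (q b : P₂), ψ b = 1 → (((1 : P₁), ⁅q, b⁆) : P₁ × P₂) ∈ ⁅K, K⁆ := by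
    intro q b hb
    obtain ⟨p', hp'⟩ := hφ (ψ q)
    have h := Subgroup.commutator_mem_commutator (memK p' q hp')
      (memK 1 b (by simp [hb]))
    have heq : (⁅((p', q) : P₁ × P₂), ((1, b) : P₁ × P₂)⁆) = (((1 : P₁), ⁅q, b⁆) : P₁ × P₂) := by
      simp [commutatorElement_def, Prod.ext_iff, mul_assoc]
    rwa [heq] at h
  rw [Subgroup.commutator_le]
  rintro ⟨p, q⟩ - ⟨a, b⟩ hab
  have ha : φ a = 1 := by
    have := Abelianization.commutator_subset_ker (φ.comp (MonoidHom.fst P₁ P₂)) hab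
    simpa using this
  have hb : ψ b = 1 := by
    have := Abelianization.commutator_subset_ker (ψ.comp (MonoidHom.snd P₁ P₂)) hab
    simpa using this
  have heq : (⁅((p, q) : P₁ × P₂), ((a, b) : P₁ × P₂)⁆) =
      ((⁅p, a⁆, (1 : P₂)) : P₁ × P₂) * (((1 : P₁), ⁅q, b⁆) : P₁ × P₂) := by
    simp [commutatorElement_def, Prod.ext_iff]
  rw [heq]
  exact mul_mem (key1 p a ha) (key2 q b hb)
end

section
/- Let P₁, P₂ be groups, G an abelian group, and φ : P₁ → G, ψ : P₂ → G surjective group homomorphisms. Let F = P₁ × P₂ and let K be the kernel of the homomorphism F → G given by (p,q) ↦ φ(p) − ψ(q). Then the image of ⁅F, F⁆ in the quotient group F / ⁅K, K⁆ is contained in the center of F / ⁅K, K⁆. -/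
open scoped commutatorElement

/-- With `F = P₁ × P₂` and `K` the kernel of `(p,q) ↦ φ(p) - ψ(q)`
(here realized as the kernel of the monoid hom `(p,q) ↦ φ(p) * (ψ q)⁻¹`, `G` being
an abelian group), the image of `⁅F, F⁆` in `F / ⁅K, K⁆` is contained in the center. -/
theorem image_commutator_le_center
    {P₁ P₂ G : Type*} [Group P₁] [Group P₂] [CommGroup G]
    (φ : P₁ →* G) (ψ : P₂ →* G)
    (hφ : Function.Surjective φ) (hψ : Function.Surjective ψ) :
    Subgroup.map
      (QuotientGroup.mk' ⁅MonoidHom.ker (φ.comp (MonoidHom.fst P₁ P₂) / ψ.comp (MonoidHom.snd P₁ P₂)),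
        MonoidHom.ker (φ.comp (MonoidHom.fst P₁ P₂) / ψ.comp (MonoidHom.snd P₁ P₂))⁆)
      ⁅(⊤ : Subgroup (P₁ × P₂)), (⊤ : Subgroup (P₁ × P₂))⁆ ≤
    Subgroup.center
      ((P₁ × P₂) ⧸ ⁅MonoidHom.ker (φ.comp (MonoidHom.fst P₁ P₂) / ψ.comp (MonoidHom.snd P₁ P₂)),
        MonoidHom.ker (φ.comp (MonoidHom.fst P₁ P₂) / ψ.comp (MonoidHom.snd P₁ P₂))⁆) := by
  set χ := φ.comp (MonoidHom.fst P₁ P₂) / ψ.comp (MonoidHom.snd P₁ P₂) with hχ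
  set K := MonoidHom.ker χ with hK
  set M := ⁅K, K⁆ with hM
  have memK : ∀ p q, φ p = ψ q → ((p, q) : P₁ × P₂) ∈ K := by
    intro p q h
    simp only [hK, MonoidHom.mem_ker, hχ, MonoidHom.div_apply, MonoidHom.comp_apply,
      MonoidHom.coe_fst, MonoidHom.coe_snd, div_eq_one]
    exact h
  -- Lemma A : commutators with a φ-trivial first-coordinate element land in M
  have lemA : ∀ x y : P₁, φ x = 1 → (((⁅x, y⁆ : P₁), (1 : P₂)) : P₁ × P₂) ∈ M := by
    intro x y hx
    obtain ⟨q', hq'⟩ := hψ (φ y)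
    have h1 : ((x, (1 : P₂)) : P₁ × P₂) ∈ K := memK x 1 (by simp [hx])
    have h2 : ((y, q') : P₁ × P₂) ∈ K := memK y q' hq'.symm
    have := Subgroup.commutator_mem_commutator h1 h2
    simpa [commutatorElement_def, Prod.ext_iff] using this
  have lemB : ∀ x y : P₂, ψ x = 1 → (((1 : P₁), (⁅x, y⁆ : P₂)) : P₁ × P₂) ∈ M := by
    intro x y hx
    obtain ⟨p', hp'⟩ := hφ (ψ y)
    have h1 : (((1 : P₁), x) : P₁ × P₂) ∈ K := memK 1 x (by simp [hx])
    have h2 : ((p', y) : P₁ × P₂) ∈ K := memK p' y hp'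
    have := Subgroup.commutator_mem_commutator h1 h2
    simpa [commutatorElement_def, Prod.ext_iff] using this
  -- derived subgroups are killed by φ and ψ
  have hd1 : (⁅(⊤ : Subgroup P₁), (⊤ : Subgroup P₁)⁆ : Subgroup P₁) ≤ φ.ker := by
    rw [Subgroup.commutator_le]
    intro a _ b _
    simp [MonoidHom.mem_ker, commutatorElement_def, mul_comm]
  have hd2 : (⁅(⊤ : Subgroup P₂), (⊤ : Subgroup P₂)⁆ : Subgroup P₂) ≤ ψ.ker := by
    rw [Subgroup.commutator_le]
    intro a _ b _
    simp [MonoidHom.mem_ker, commutatorElement_def, mul_comm]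
  -- main argument
  rintro z ⟨c, hc, rfl⟩
  rw [Subgroup.mem_center_iff]
  intro g
  obtain ⟨f, rfl⟩ := QuotientGroup.mk'_surjective M g
  rw [← map_mul, ← map_mul]
  rw [QuotientGroup.mk'_apply, QuotientGroup.mk'_apply, QuotientGroup.eq]
  -- (f*c)⁻¹ * (c*f) = ⁅c⁻¹, f⁻¹⁆
  have key : (f * c)⁻¹ * (c * f) = ⁅c⁻¹, f⁻¹⁆ := by
    simp [commutatorElement_def, mul_assoc]
  rw [key]
  -- decompose c⁻¹ ∈ ⁅⊤,⊤⁆ componentwise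
  have hc' : c⁻¹ ∈ ⁅(⊤ : Subgroup (P₁ × P₂)), (⊤ : Subgroup (P₁ × P₂))⁆ := inv_mem hc
  rw [← Subgroup.top_prod_top, Subgroup.commutator_prod_prod, Subgroup.mem_prod] at hc'
  obtain ⟨h1, h2⟩ := hc'
  have hφc : φ (c⁻¹).1 = 1 := hd1 h1
  have hψc : ψ (c⁻¹).2 = 1 := hd2 h2
  have split : (⁅c⁻¹, f⁻¹⁆ : P₁ × P₂)
      = ((⁅(c⁻¹).1, (f⁻¹).1⁆ : P₁), (1 : P₂)) * (((1 : P₁), (⁅(c⁻¹).2, (f⁻¹).2⁆ : P₂))) := by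
    simp [commutatorElement_def, Prod.ext_iff]
  rw [split]
  exact mul_mem (lemA _ _ hφc) (lemB _ _ hψc)
end

section
/- Let P₁, P₂ be groups, G an abelian group, and φ : P₁ → G, ψ : P₂ → G surjective group homomorphisms. Let F = P₁ × P₂ and let K be the kernel of the homomorphism F → G given by (p,q) ↦ φ(p) − ψ(q). Then for all x, y, z ∈ F, the element [x·y, z] · ([x,z]·[y,z])⁻¹ belongs to ⁅K, K⁆; that is, the commutator map F × F → ⁅F,F⁆/⁅K,K⁆ is bilinear. -/
open scoped commutatorElement

/-- With `F = P₁ × P₂` and `K` the kernel of `(p,q) ↦ φ(p) - ψ(q)`,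
for all `x y z ∈ F` the element `⁅x*y, z⁆ * (⁅x,z⁆ * ⁅y,z⁆)⁻¹` lies in `⁅K, K⁆`;
i.e. the induced commutator map `F × F → ⁅F,F⁆/⁅K,K⁆` is bilinear. -/
theorem commutator_map_bilinear_mod_commutator_of_kernel
    {P₁ P₂ G : Type*} [Group P₁] [Group P₂] [CommGroup G]
    (φ : P₁ →* G) (ψ : P₂ →* G)
    (hφ : Function.Surjective φ) (hψ : Function.Surjective ψ)
    (K : Subgroup (P₁ × P₂))
    (hK : ∀ p q, (p, q) ∈ K ↔ φ p = ψ q) :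
    ∀ x y z : P₁ × P₂, ⁅x * y, z⁆ * (⁅x, z⁆ * ⁅y, z⁆)⁻¹ ∈ ⁅K, K⁆ := by
  have hφc : ∀ a b : P₁, φ ⁅a, b⁆ = 1 := fun a b => by
    rw [map_commutatorElement]
    exact commutatorElement_eq_one_iff_commute.mpr (mul_comm _ _)
  have hψc : ∀ a b : P₂, ψ ⁅a, b⁆ = 1 := fun a b => by
    rw [map_commutatorElement]
    exact commutatorElement_eq_one_iff_commute.mpr (mul_comm _ _)
  -- commutators of F lie in K
  have hcomK : ∀ u v : P₁ × P₂, ⁅u, v⁆ ∈ K := fun u v => by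
    have : ⁅u, v⁆ = (⁅u.1, v.1⁆, ⁅u.2, v.2⁆) := rfl
    rw [this, hK, hφc, hψc]
  -- key: ⁅v, c⁆ ∈ ⁅K, K⁆ whenever φ c.1 = 1 and ψ c.2 = 1
  have key : ∀ (v c : P₁ × P₂), φ c.1 = 1 → ψ c.2 = 1 → ⁅v, c⁆ ∈ ⁅K, K⁆ := by
    rintro ⟨a, b⟩ ⟨c₁, c₂⟩ h1 h2
    obtain ⟨b', hb'⟩ := hψ (φ a)
    obtain ⟨a', ha'⟩ := hφ (ψ b)
    have m1 : (a, b') ∈ K := (hK _ _).mpr hb'.symm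
    have m2 : (a', b) ∈ K := (hK _ _).mpr ha'
    have mc1 : ((c₁, (1 : P₂)) : P₁ × P₂) ∈ K := (hK _ _).mpr (by simp [h1])
    have mc2 : (((1 : P₁), c₂) : P₁ × P₂) ∈ K := (hK _ _).mpr (by simp [h2])
    have e1 : ⁅((a, b') : P₁ × P₂), ((c₁, 1) : P₁ × P₂)⁆ = (⁅a, c₁⁆, 1) := by
      ext <;> simp [commutatorElement_def]
    have e2 : ⁅((a', b) : P₁ × P₂), ((1, c₂) : P₁ × P₂)⁆ = (1, ⁅b, c₂⁆) := by
      ext <;> simp [commutatorElement_def]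
    have h1' := Subgroup.commutator_mem_commutator m1 mc1
    have h2' := Subgroup.commutator_mem_commutator m2 mc2
    rw [e1] at h1'
    rw [e2] at h2'
    have : ⁅((a, b) : P₁ × P₂), ((c₁, c₂) : P₁ × P₂)⁆
        = ((⁅a, c₁⁆, (1 : P₂)) : P₁ × P₂) * ((1 : P₁), ⁅b, c₂⁆) := by
      ext <;> simp [commutatorElement_def]
    rw [this]
    exact mul_mem h1' h2'
  intro x y z
  have heq : ⁅x * y, z⁆ * (⁅x, z⁆ * ⁅y, z⁆)⁻¹
      = ⁅x, ⁅y, z⁆⁆ * ⁅⁅y, z⁆, ⁅x, z⁆⁆ := by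
    simp only [commutatorElement_def]
    group
  rw [heq]
  exact mul_mem
    (key x ⁅y, z⁆ (hφc _ _) (hψc _ _))
    (Subgroup.commutator_mem_commutator (hcomK y z) (hcomK x z))
end

section
/- Let P₁, P₂ be groups, G an abelian group, and φ : P₁ → G, ψ : P₂ → G surjective group homomorphisms. Let F = P₁ × P₂ and let K be the kernel of the homomorphism F → G given by (p,q) ↦ φ(p) − ψ(q). If p ∈ P₁ satisfies φ(p) = 0, then for every x ∈ F the commutator [(p,1), x] belongs to ⁅K, K⁆; likewise, if q ∈ P₂ satisfies ψ(q) = 0, then for every x ∈ F the commutator [(1,q), x] belongs to ⁅K, K⁆. -/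
open scoped commutatorElement

/-- With `F = P₁ × P₂` and `K` the kernel of `(p,q) ↦ φ(p) - ψ(q)`,
if `p ∈ P₁` satisfies `φ(p) = 1` then `⁅(p,1), x⁆ ∈ ⁅K,K⁆` for all `x ∈ F`,
and likewise if `q ∈ P₂` satisfies `ψ(q) = 1` then `⁅(1,q), x⁆ ∈ ⁅K,K⁆` for all `x ∈ F`. -/
theorem commutator_with_kernel_element_mem
    {P₁ P₂ G : Type*} [Group P₁] [Group P₂] [CommGroup G]
    (φ : P₁ →* G) (ψ : P₂ →* G)
    (hφ : Function.Surjective φ) (hψ : Function.Surjective ψ)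
    (K : Subgroup (P₁ × P₂))
    (hK : ∀ p q, (p, q) ∈ K ↔ φ p = ψ q) :
    (∀ p : P₁, φ p = 1 → ∀ x : P₁ × P₂, ⁅((p, 1) : P₁ × P₂), x⁆ ∈ ⁅K, K⁆) ∧
    (∀ q : P₂, ψ q = 1 → ∀ x : P₁ × P₂, ⁅((1, q) : P₁ × P₂), x⁆ ∈ ⁅K, K⁆) := by
  constructor
  · intro p hp x
    obtain ⟨a, b⟩ := x
    obtain ⟨c, hc⟩ := hψ (φ a)
    have h1 : ⁅((p, 1) : P₁ × P₂), (a, b)⁆ = ⁅((p, 1) : P₁ × P₂), (a, c)⁆ := by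
      simp [commutatorElement_def, Prod.mul_def]
    rw [h1]
    exact Subgroup.commutator_mem_commutator ((hK p 1).2 (by simp [hp]))
      ((hK a c).2 hc.symm)
  · intro q hq x
    obtain ⟨a, b⟩ := x
    obtain ⟨c, hc⟩ := hφ (ψ b)
    have h1 : ⁅((1, q) : P₁ × P₂), (a, b)⁆ = ⁅((1, q) : P₁ × P₂), (c, b)⁆ := by
      simp [commutatorElement_def, Prod.mul_def]
    rw [h1]
    exact Subgroup.commutator_mem_commutator ((hK 1 q).2 (by simp [hq]))
      ((hK c b).2 hc)
end

section
/- Let P₁, P₂ be groups, G an abelian group, and φ : P₁ → G, ψ : P₂ → G surjective group homomorphisms. Let F = P₁ × P₂ and let K be the kernel of the homomorphism F → G given by (p,q) ↦ φ(p) − ψ(q). Then the commutator subgroup ⁅F, F⁆ is contained in the subgroup of F generated by ⁅K, K⁆ together with the set of all commutators [(p,1),(p′,1)] with p, p′ ∈ P₁. -/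
open scoped commutatorElement

/-- With `F = P₁ × P₂` and `K` the kernel of `(p,q) ↦ φ(p) - ψ(q)`,
the commutator subgroup `⁅F,F⁆` is contained in the subgroup generated by `⁅K,K⁆`
together with all commutators `⁅(p,1), (p',1)⁆`, `p, p' ∈ P₁`. -/
theorem commutator_le_closure_kernel_commutators_and_first_factor
    {P₁ P₂ G : Type*} [Group P₁] [Group P₂] [CommGroup G]
    (φ : P₁ →* G) (ψ : P₂ →* G)
    (hφ : Function.Surjective φ) (hψ : Function.Surjective ψ)
    (K : Subgroup (P₁ × P₂))
    (hK : ∀ p q, (p, q) ∈ K ↔ φ p = ψ q) :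
    ⁅(⊤ : Subgroup (P₁ × P₂)), (⊤ : Subgroup (P₁ × P₂))⁆ ≤
      Subgroup.closure ((⁅K, K⁆ : Subgroup (P₁ × P₂)) ∪
        {x : P₁ × P₂ | ∃ p p' : P₁, x = ⁅((p, 1) : P₁ × P₂), ((p', 1) : P₁ × P₂)⁆}) := by
  rw [Subgroup.commutator_le]
  rintro ⟨p, q⟩ - ⟨p', q'⟩ -
  obtain ⟨p₀, hp₀⟩ := hφ (ψ q)
  obtain ⟨p₀', hp₀'⟩ := hφ (ψ q')
  have hk1 : ((p₀, q) : P₁ × P₂) ∈ K := (hK _ _).2 hp₀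
  have hk2 : ((p₀', q') : P₁ × P₂) ∈ K := (hK _ _).2 hp₀'
  have key : ⁅((p, q) : P₁ × P₂), (p', q')⁆ =
      ⁅((p, 1) : P₁ × P₂), ((p', 1) : P₁ × P₂)⁆ *
      ⁅((p₀, 1) : P₁ × P₂), ((p₀', 1) : P₁ × P₂)⁆⁻¹ *
      ⁅((p₀, q) : P₁ × P₂), (p₀', q')⁆ := by
    have : ∀ a b : P₁ × P₂, ⁅a, b⁆ = (⁅a.1, b.1⁆, ⁅a.2, b.2⁆) := fun a b => rfl
    simp only [this, Prod.mk_mul_mk, Prod.inv_mk, Prod.mk.injEq]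
    constructor <;> group
  rw [key]
  refine mul_mem (mul_mem ?_ (inv_mem ?_)) ?_
  · exact Subgroup.subset_closure (Or.inr ⟨p, p', rfl⟩)
  · exact Subgroup.subset_closure (Or.inr ⟨p₀, p₀', rfl⟩)
  · exact Subgroup.subset_closure (Or.inl (Subgroup.commutator_mem_commutator hk1 hk2))
end

section
/- Let F be a group of nilpotency class at most 2, i.e. ⁅F, ⁅F, F⁆⁆ = 1, let k ≥ 1 and n ≥ 1 be integers, and let a₁, …, aₙ ∈ F satisfy aᵢᵏ = 1 for all i and a₁ a₂ ⋯ aₙ = 1. Then ∏_{1 ≤ i < j ≤ n−1} [aᵢ, aⱼ]^{k(k−1)/2} = 1 (the product taken in any fixed order, all factors being central). -/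
open scoped commutatorElement

namespace Class2Aux

variable {F : Type*} [Group F]

/-- Auxiliary product `∏ᵢ ⁅lᵢ, lᵢ₊₁⋯⁆^m` defined recursively. -/
def Dprod (m : ℕ) : List F → F
  | [] => 1
  | x :: l => ⁅x, l.prod⁆ ^ m * Dprod m l

@[simp] lemma Dprod_nil (m : ℕ) : Dprod m ([] : List F) = 1 := rfl

lemma Dprod_cons (m : ℕ) (x : F) (l : List F) :
    Dprod m (x :: l) = ⁅x, l.prod⁆ ^ m * Dprod m l := rfl

lemma central_list_pow (m : ℕ) : ∀ l : List F,
    (∀ z ∈ l, ∀ g : F, Commute z g) → l.prod ^ m = (l.map (· ^ m)).prod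
  | [], _ => by simp
  | x :: l, h => by
    rw [List.prod_cons, List.map_cons, List.prod_cons,
      (h x List.mem_cons_self l.prod).mul_pow,
      central_list_pow m l (fun z hz => h z (List.mem_cons_of_mem x hz))]

section central

variable (hcen : ∀ x y g : F, Commute ⁅x, y⁆ g)

include hcen

lemma comm_mul_right (x y z : F) : ⁅x, y * z⁆ = ⁅x, y⁆ * ⁅x, z⁆ := by
  have h : ⁅x, y * z⁆ = ⁅x, y⁆ * (y * ⁅x, z⁆ * y⁻¹) := by
    simp only [commutatorElement_def]
    group
  have h2 : y * ⁅x, z⁆ * y⁻¹ = ⁅x, z⁆ := by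
    rw [← (hcen x z y).eq, mul_inv_cancel_right]
  rw [h, h2]

lemma comm_prod (x : F) : ∀ l : List F,
    ⁅x, l.prod⁆ = (l.map fun y => ⁅x, y⁆).prod
  | [] => by simp
  | y :: l => by
    rw [List.prod_cons, comm_mul_right hcen, comm_prod x l, List.map_cons,
      List.prod_cons]

lemma pow_mul_swap (x y : F) : ∀ j : ℕ, y ^ j * x = x * y ^ j * ⁅y, x⁆ ^ j
  | 0 => by simp
  | j + 1 => by
    have h1 : y * x = x * y * ⁅y, x⁆ := by
      have h0 : y * x = ⁅y, x⁆ * (x * y) := by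
        simp only [commutatorElement_def]; group
      rw [h0, (hcen y x (x * y)).eq, mul_assoc]
    calc y ^ (j + 1) * x = y ^ j * (y * x) := by rw [pow_succ, mul_assoc]
      _ = y ^ j * (x * y * ⁅y, x⁆) := by rw [h1]
      _ = (y ^ j * x) * y * ⁅y, x⁆ := by simp [mul_assoc]
      _ = x * y ^ j * ⁅y, x⁆ ^ j * y * ⁅y, x⁆ := by rw [pow_mul_swap x y j]
      _ = x * y ^ j * (⁅y, x⁆ ^ j * y) * ⁅y, x⁆ := by simp [mul_assoc]
      _ = x * y ^ j * (y * ⁅y, x⁆ ^ j) * ⁅y, x⁆ := by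
            rw [((hcen y x y).pow_left j).eq]
      _ = x * y ^ (j + 1) * ⁅y, x⁆ ^ (j + 1) := by
            rw [pow_succ, pow_succ]; simp [mul_assoc]

lemma mul_pow_class2 (x y : F) : ∀ j : ℕ,
    (x * y) ^ j = x ^ j * y ^ j * ⁅y, x⁆ ^ (j.choose 2)
  | 0 => by simp
  | j + 1 => by
    have hC : (j + 1).choose 2 = j.choose 2 + j := by
      rw [Nat.choose_succ_succ, Nat.choose_one_right, Nat.add_comm]
    calc (x * y) ^ (j + 1) = (x * y) ^ j * (x * y) := by rw [pow_succ]
      _ = x ^ j * y ^ j * ⁅y, x⁆ ^ j.choose 2 * (x * y) := by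
            rw [mul_pow_class2 x y j]
      _ = x ^ j * y ^ j * (⁅y, x⁆ ^ j.choose 2 * x) * y := by simp [mul_assoc]
      _ = x ^ j * y ^ j * (x * ⁅y, x⁆ ^ j.choose 2) * y := by
            rw [((hcen y x x).pow_left _).eq]
      _ = x ^ j * (y ^ j * x) * (⁅y, x⁆ ^ j.choose 2 * y) := by simp [mul_assoc]
      _ = x ^ j * (x * y ^ j * ⁅y, x⁆ ^ j) * (y * ⁅y, x⁆ ^ j.choose 2) := by
            rw [pow_mul_swap hcen x y j, ((hcen y x y).pow_left _).eq]
      _ = x ^ (j + 1) * y ^ (j + 1) * (⁅y, x⁆ ^ j * ⁅y, x⁆ ^ j.choose 2) := by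
            have hy : ⁅y, x⁆ ^ j * (y * ⁅y, x⁆ ^ j.choose 2)
                = y * (⁅y, x⁆ ^ j * ⁅y, x⁆ ^ j.choose 2) := by
              rw [← mul_assoc, ((hcen y x y).pow_left j).eq, mul_assoc]
            rw [pow_succ, pow_succ]
            simp only [mul_assoc]
            rw [hy]
      _ = x ^ (j + 1) * y ^ (j + 1) * ⁅y, x⁆ ^ ((j + 1).choose 2) := by
            rw [hC, ← pow_add, Nat.add_comm j (j.choose 2)]

lemma Dprod_central (m : ℕ) : ∀ l : List F, ∀ g : F, Commute (Dprod m l) g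
  | [], g => by rw [Dprod_nil]; exact Commute.one_left g
  | x :: l, g => by
    rw [Dprod_cons]
    exact ((hcen x l.prod g).pow_left m).mul_left (Dprod_central m l g)

lemma prod_pow_class2 (k : ℕ) : ∀ l : List F,
    l.prod ^ k = (l.map (· ^ k)).prod * (Dprod (k.choose 2) l)⁻¹
  | [] => by simp
  | x :: l => by
    rw [List.prod_cons, mul_pow_class2 hcen x l.prod k, prod_pow_class2 k l,
      List.map_cons, List.prod_cons, Dprod_cons]
    have h : ⁅l.prod, x⁆ ^ k.choose 2 = (⁅x, l.prod⁆ ^ k.choose 2)⁻¹ := by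
      rw [← commutatorElement_inv, inv_pow]
    rw [h, mul_inv_rev]
    group

/-- The key combinatorial identity: the double product in the statement equals
`Dprod` of the list with its last entry removed. -/
lemma flat_eq_Dprod (m : ℕ) : ∀ (N : ℕ) (g : Fin N → F),
    (((List.finRange N).map fun i =>
        ⁅g i, (((List.finRange N).filter fun j =>
            decide (i < j) && decide (j.val + 1 < N)).map g).prod⁆ ^ m) : List F).prod
      = Dprod m ((List.ofFn g).dropLast)
  | 0, g => by simp [List.finRange]
  | N + 1, g => by
    have hsub : ∀ (h : Fin N → F),
        ((List.finRange N).filter fun j : Fin N => decide (j.val + 1 < N)).map h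
          = (List.ofFn h).dropLast := by
      intro h
      cases N with
      | zero => simp [List.finRange]
      | succ N' =>
        have h1 : ((List.finRange (N' + 1)).filter
            fun j : Fin (N' + 1) => decide (j.val + 1 < N' + 1))
            = (List.finRange N').map Fin.castSucc := by
          rw [List.finRange_succ_last, List.filter_append, List.filter_map]
          have e2 : ((fun j : Fin (N' + 1) => decide (j.val + 1 < N' + 1)) ∘ Fin.castSucc)
              = fun _ : Fin N' => true := by
            funext j
            exact decide_eq_true (by simpa [Fin.coe_castSucc] using Nat.succ_lt_succ j.isLt)
          rw [e2, List.filter_true, List.filter_cons]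
          simp [Fin.val_last]
        rw [h1, List.map_map, List.ofFn_succ' h, List.concat_eq_append,
          List.dropLast_concat, List.ofFn_eq_map]
        rfl
    -- head term
    have hhead : (List.filter (fun j : Fin (N+1) =>
          decide ((0 : Fin (N+1)) < j) && decide (j.val + 1 < N + 1)) (List.finRange (N+1))).map g
        = ((List.finRange N).filter fun j : Fin N => decide (j.val + 1 < N)).map
            (fun j => g j.succ) := by
      rw [List.finRange_succ, List.filter_cons]
      have e0 : (decide ((0 : Fin (N+1)) < 0) && decide ((0 : Fin (N+1)).val + 1 < N + 1))
          = false := by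
        simp [lt_irrefl]
      rw [e0]
      simp only [Bool.false_eq_true, if_false]
      rw [List.filter_map, List.map_map]
      have e1 : ((fun j : Fin (N+1) => decide ((0 : Fin (N+1)) < j) && decide (j.val + 1 < N + 1))
          ∘ Fin.succ) = fun j : Fin N => decide (j.val + 1 < N) := by
        funext j
        simp only [Function.comp_apply]
        rw [decide_eq_true (j.succ_pos), Bool.true_and]
        exact decide_eq_decide.2 (by rw [Fin.val_succ]; omega)
      rw [e1]
      rfl
    -- tail terms
    have htail : ∀ i : Fin N,
        ((fun i : Fin (N+1) =>
          ⁅g i, ((List.filter (fun j => decide (i < j) && decide (j.val + 1 < N + 1))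
            (List.finRange (N+1))).map g).prod⁆ ^ m) ∘ Fin.succ) i
        = (fun i : Fin N =>
          ⁅(fun t : Fin N => g t.succ) i, ((List.filter
              (fun j => decide (i < j) && decide (j.val + 1 < N))
              (List.finRange N)).map fun t : Fin N => g t.succ).prod⁆ ^ m) i := by
      intro i
      simp only [Function.comp_apply]
      congr 2
      rw [List.finRange_succ, List.filter_cons]
      have e0 : (decide (i.succ < (0 : Fin (N+1))) && decide ((0 : Fin (N+1)).val + 1 < N + 1))
          = false := by
        have : ¬ (i.succ < (0 : Fin (N+1))) := by simp
        simp [this]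
      rw [e0]
      simp only [Bool.false_eq_true, if_false]
      rw [List.filter_map, List.map_map]
      have e1 : ((fun j : Fin (N+1) => decide (i.succ < j) && decide (j.val + 1 < N + 1))
          ∘ Fin.succ) = fun j : Fin N => decide (i < j) && decide (j.val + 1 < N) := by
        funext j
        simp only [Function.comp_apply]
        congr 1
        · exact decide_eq_decide.2 Fin.succ_lt_succ_iff
        · exact decide_eq_decide.2 (by rw [Fin.val_succ]; omega)
      rw [e1]
      rfl
    have hsplit : ∀ (T : Fin (N+1) → F),
        (List.map T (List.finRange (N+1))).prod
          = T 0 * ((List.finRange N).map (T ∘ Fin.succ)).prod := by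
      intro T
      rw [List.finRange_succ, List.map_cons, List.prod_cons, List.map_map]
    rw [hsplit]
    beta_reduce
    rw [List.map_congr_left (fun i _ => htail i),
      flat_eq_Dprod m N (fun t => g t.succ), hhead, hsub (fun j => g j.succ)]
    -- now match with Dprod of dropLast (ofFn g)
    cases N with
    | zero =>
      simp [List.ofFn_succ, Dprod]
    | succ N' =>
      rw [List.ofFn_succ (f := g)]
      have hne : (List.ofFn fun i : Fin (N'+1) => g i.succ) ≠ [] := by
        simp [List.ofFn_succ]
      rw [List.dropLast_cons_of_ne_nil hne, Dprod_cons]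

end central

end Class2Aux

/-- In a group of nilpotency class ≤ 2, if `a₁, …, aₙ` satisfy `aᵢᵏ = 1`
and `a₁ ⋯ aₙ = 1`, then `∏_{i < j ≤ n-1} ⁅aᵢ, aⱼ⁆^(k(k-1)/2) = 1` (the factors are
central, hence commute, so the order of the product—here lexicographic—is irrelevant). -/
theorem prod_commutator_pow_eq_one_of_class_two
    {F : Type*} [Group F]
    (hnil : ⁅(⊤ : Subgroup F), ⁅(⊤ : Subgroup F), (⊤ : Subgroup F)⁆⁆ = ⊥)
    (k n : ℕ) (hk : 1 ≤ k) (hn : 1 ≤ n) (a : Fin n → F)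
    (hak : ∀ i, a i ^ k = 1)
    (haprod : (List.ofFn a).prod = 1) :
    (((List.finRange n).flatMap fun i =>
        (((List.finRange n).filter fun j => decide (i < j) && decide (j.val + 1 < n)).map
          fun j => ⁅a i, a j⁆ ^ (k * (k - 1) / 2))) : List F).prod = 1 := by
  classical
  have hcen : ∀ x y g : F, Commute ⁅x, y⁆ g := by
    intro x y g
    have h1 : ⁅g, ⁅x, y⁆⁆ = 1 := by
      have h2 := Subgroup.commutator_mem_commutator (Subgroup.mem_top g)
        (Subgroup.commutator_mem_commutator (H₁ := (⊤ : Subgroup F)) (H₂ := (⊤ : Subgroup F))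
          (Subgroup.mem_top x) (Subgroup.mem_top y))
      rw [hnil, Subgroup.mem_bot] at h2
      exact h2
    exact (commutatorElement_eq_one_iff_commute.1 h1).symm
  have hm2 : k * (k - 1) / 2 = k.choose 2 := (Nat.choose_two_right k).symm
  -- rewrite goal product as map of inner products
  have hflat : (((List.finRange n).flatMap fun i =>
        (((List.finRange n).filter fun j => decide (i < j) && decide (j.val + 1 < n)).map
          fun j => ⁅a i, a j⁆ ^ (k * (k - 1) / 2))) : List F).prod
      = (((List.finRange n).map fun i =>
          ⁅a i, (((List.finRange n).filter fun j =>
            decide (i < j) && decide (j.val + 1 < n)).map a).prod⁆ ^ (k.choose 2)) : List F).prod := by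
    rw [show ((List.finRange n).flatMap fun i =>
        (((List.finRange n).filter fun j => decide (i < j) && decide (j.val + 1 < n)).map
          fun j => ⁅a i, a j⁆ ^ (k * (k - 1) / 2)))
      = (((List.finRange n).map fun i =>
        (((List.finRange n).filter fun j => decide (i < j) && decide (j.val + 1 < n)).map
          fun j => ⁅a i, a j⁆ ^ (k * (k - 1) / 2)))).flatten from rfl]
    rw [List.prod_flatten, List.map_map]
    congr 1
    apply List.map_congr_left
    intro i _
    simp only [Function.comp_apply]
    have e1 : (((List.finRange n).filter fun j =>
          decide (i < j) && decide (j.val + 1 < n)).map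
            fun j => ⁅a i, a j⁆ ^ (k * (k - 1) / 2))
        = ((((List.finRange n).filter fun j =>
            decide (i < j) && decide (j.val + 1 < n)).map fun j => ⁅a i, a j⁆).map
              (· ^ (k.choose 2))) := by
      rw [List.map_map]
      congr 1
      funext j
      simp [hm2]
    rw [e1, ← Class2Aux.central_list_pow (k.choose 2)
        ((((List.finRange n).filter fun j => decide (i < j) && decide (j.val + 1 < n)).map
          fun j => ⁅a i, a j⁆))
        (by
          intro z hz g
          rw [List.mem_map] at hz
          obtain ⟨j, _, rfl⟩ := hz
          exact hcen _ _ g),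
      Class2Aux.comm_prod hcen (a i)
        (((List.finRange n).filter fun j => decide (i < j) && decide (j.val + 1 < n)).map a),
      List.map_map]
    rfl
  rw [hflat, Class2Aux.flat_eq_Dprod hcen (k.choose 2) n a]
  -- now show Dprod (k.choose 2) (dropLast (ofFn a)) = 1
  obtain ⟨n', rfl⟩ : ∃ n', n = n' + 1 := ⟨n - 1, by omega⟩
  have hdl : (List.ofFn a).dropLast = List.ofFn fun i : Fin n' => a i.castSucc := by
    rw [List.ofFn_succ' a, List.concat_eq_append, List.dropLast_concat]
  have hstep : ((List.ofFn a).dropLast).prod * a (Fin.last n') = 1 := by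
    have h3 := haprod
    rw [List.ofFn_succ' a, List.concat_eq_append, List.prod_append] at h3
    rw [hdl]
    simpa using h3
  have hprod1 : ((List.ofFn a).dropLast).prod = (a (Fin.last n'))⁻¹ :=
    eq_inv_of_mul_eq_one_left hstep
  have hpk : ((List.ofFn a).dropLast).prod ^ k = 1 := by
    rw [hprod1, inv_pow, hak, inv_one]
  have hmapk : (((List.ofFn a).dropLast).map (· ^ k)).prod = 1 := by
    apply List.prod_eq_one
    intro z hz
    rw [hdl, List.map_ofFn] at hz
    rw [List.mem_ofFn] at hz
    obtain ⟨i, hi⟩ := hz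
    rw [← hi]
    exact hak _
  have hD := Class2Aux.prod_pow_class2 hcen k ((List.ofFn a).dropLast)
  rw [hpk, hmapk, one_mul] at hD
  exact inv_eq_one.1 hD.symm
end

section
/- In the Bauer–Catanese case G = (ℤ/2ℤ)³: with F = Π₁ × Π₂ and K the kernel of (p,q) ↦ φ(p) − ψ(q), the quotient group ⁅F, F⁆ / ⁅K, K⁆ is isomorphic to (ℤ/2ℤ)². -/
set_option maxRecDepth 40000

open scoped commutatorElement

/-- Relators of `Π₁ = ⟨a₁,…,a₅ ∣ a₁²,…,a₅², a₁a₂a₃a₄a₅⟩`. -/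
def bcRels₁ : Set (FreeGroup (Fin 5)) :=
  {FreeGroup.of 0 ^ 2, FreeGroup.of 1 ^ 2, FreeGroup.of 2 ^ 2, FreeGroup.of 3 ^ 2,
   FreeGroup.of 4 ^ 2,
   FreeGroup.of 0 * FreeGroup.of 1 * FreeGroup.of 2 * FreeGroup.of 3 * FreeGroup.of 4}

/-- Relators of `Π₂ = ⟨b₁,…,b₆ ∣ b₁²,…,b₆², b₁b₂b₃b₄b₅b₆⟩`. -/
def bcRels₂ : Set (FreeGroup (Fin 6)) :=
  {FreeGroup.of 0 ^ 2, FreeGroup.of 1 ^ 2, FreeGroup.of 2 ^ 2, FreeGroup.of 3 ^ 2,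
   FreeGroup.of 4 ^ 2, FreeGroup.of 5 ^ 2,
   FreeGroup.of 0 * FreeGroup.of 1 * FreeGroup.of 2 * FreeGroup.of 3 * FreeGroup.of 4 *
     FreeGroup.of 5}

/-- The group `G = (ℤ/2ℤ)³`, written multiplicatively. -/
abbrev bcG : Type := Multiplicative (ZMod 2 × ZMod 2 × ZMod 2)

/-! ### auxiliary definitions -/

abbrev bcV3 : Type := ZMod 2 × ZMod 2 × ZMod 2
abbrev bcZ2 : Type := ZMod 2 × ZMod 2
abbrev bcP1 : Type := PresentedGroup bcRels₁
abbrev bcP2 : Type := PresentedGroup bcRels₂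
abbrev bcF : Type := bcP1 × bcP2

def bcB1 (g g' : bcV3) : bcZ2 := (g.1 * g'.2.1, g.1 * g'.2.2)
def bcB2 (h h' : bcV3) : bcZ2 := ((h.1 + h.2.1) * h'.2.1, (h.1 + h.2.2) * h'.2.2)

def bcU : Type := bcZ2 × bcV3 × bcV3

namespace bcU

instance : DecidableEq bcU := inferInstanceAs (DecidableEq (bcZ2 × bcV3 × bcV3))
instance : Fintype bcU := inferInstanceAs (Fintype (bcZ2 × bcV3 × bcV3))

def mul' (u v : bcU) : bcU :=
  (u.1 + v.1 + bcB1 u.2.1 v.2.1 + bcB2 u.2.2 v.2.2, u.2.1 + v.2.1, u.2.2 + v.2.2)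

instance : One bcU := ⟨((0,0),(0,0,0),(0,0,0))⟩
instance : Mul bcU := ⟨mul'⟩
instance : Inv bcU := ⟨fun u => (u.1 + bcB1 u.2.1 u.2.1 + bcB2 u.2.2 u.2.2, u.2.1, u.2.2)⟩

instance instGroup : Group bcU :=
  Group.ofLeftAxioms
    (by
      rintro ⟨⟨z1,z2⟩,⟨a1,a2,a3⟩,⟨b1,b2,b3⟩⟩ ⟨⟨w1,w2⟩,⟨c1,c2,c3⟩,⟨d1,d2,d3⟩⟩
        ⟨⟨v1,v2⟩,⟨e1,e2,e3⟩,⟨f1,f2,f3⟩⟩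
      show (mul' (mul' _ _) _ : bcZ2 × bcV3 × bcV3) = mul' _ (mul' _ _)
      simp only [mul', bcB1, bcB2, Prod.mk_add_mk, Prod.mk.injEq]
      refine Prod.ext (Prod.ext ?_ ?_) (Prod.ext (Prod.ext ?_ (Prod.ext ?_ ?_)) (Prod.ext ?_ (Prod.ext ?_ ?_))) <;> ring)
    (by decide)
    (by decide)

theorem mul_def (u v : bcU) : u * v = mul' u v := rfl

/-- the `g`-component, as a homomorphism to an abelian group -/
def compG : bcU →* Multiplicative bcV3 where
  toFun u := Multiplicative.ofAdd u.2.1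
  map_one' := rfl
  map_mul' _ _ := rfl

/-- the `h`-component, as a homomorphism to an abelian group -/
def compH : bcU →* Multiplicative bcV3 where
  toFun u := Multiplicative.ofAdd u.2.2
  map_one' := rfl
  map_mul' _ _ := rfl

theorem commute_of_parts : ∀ u v : bcU, u.2.2 = 0 → v.2.1 = 0 → u * v = v * u := by
  rintro ⟨z, g, h⟩ ⟨z', g', h'⟩ h1 h2
  dsimp at h1 h2
  subst h1; subst h2
  revert z g z' h'
  decide

theorem commutator_eq_one : ∀ u v : bcU, u.2.1 = u.2.2 → v.2.1 = v.2.2 → ⁅u, v⁆ = 1 := by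
  rintro ⟨z, g, h⟩ ⟨z', g', h'⟩ h1 h2
  dsimp at h1 h2
  subst h1; subst h2
  revert z g z' g'
  decide

end bcU

/-! ### the two homomorphisms to `bcU` -/

def bcAImg : Fin 5 → bcU :=
  ![((0,0),(1,0,0),(0,0,0)), ((0,0),(0,1,0),(0,0,0)), ((0,0),(0,0,1),(0,0,0)),
    ((1,1),(1,0,0),(0,0,0)), ((0,0),(0,1,1),(0,0,0))]

def bcBImg : Fin 6 → bcU :=
  ![((0,0),(0,0,0),(1,1,0)), ((0,0),(0,0,0),(1,0,1)), ((0,0),(0,0,0),(1,1,1)),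
    ((0,0),(0,0,0),(1,1,0)), ((0,0),(0,0,0),(1,0,1)), ((0,0),(0,0,0),(1,1,1))]

theorem bcAImg_rels : ∀ r ∈ bcRels₁, FreeGroup.lift bcAImg r = 1 := by
  intro r hr
  simp only [bcRels₁, Set.mem_insert_iff, Set.mem_singleton_iff] at hr
  rcases hr with rfl | rfl | rfl | rfl | rfl | rfl <;>
    simp only [map_pow, map_mul, FreeGroup.lift_apply_of] <;> decide

theorem bcBImg_rels : ∀ r ∈ bcRels₂, FreeGroup.lift bcBImg r = 1 := by
  intro r hr
  simp only [bcRels₂, Set.mem_insert_iff, Set.mem_singleton_iff] at hr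
  rcases hr with rfl | rfl | rfl | rfl | rfl | rfl | rfl <;>
    simp only [map_pow, map_mul, FreeGroup.lift_apply_of] <;> decide

def bcθ1 : bcP1 →* bcU := PresentedGroup.toGroup bcAImg_rels
def bcθ2 : bcP2 →* bcU := PresentedGroup.toGroup bcBImg_rels

theorem bcθ1_h (p : bcP1) : (bcθ1 p).2.2 = 0 := by
  have h : bcU.compH.comp bcθ1 = 1 := by
    apply PresentedGroup.ext
    intro i
    show bcU.compH (bcθ1 (PresentedGroup.of i)) = 1
    rw [show bcθ1 (PresentedGroup.of i) = bcAImg i from PresentedGroup.toGroup.of _]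
    fin_cases i <;> decide
  have := DFunLike.congr_fun h p
  exact this

theorem bcθ2_g (q : bcP2) : (bcθ2 q).2.1 = 0 := by
  have h : bcU.compG.comp bcθ2 = 1 := by
    apply PresentedGroup.ext
    intro i
    show bcU.compG (bcθ2 (PresentedGroup.of i)) = 1
    rw [show bcθ2 (PresentedGroup.of i) = bcBImg i from PresentedGroup.toGroup.of _]
    fin_cases i <;> decide
  have := DFunLike.congr_fun h q
  exact this

theorem bcθ_commute : ∀ p q, Commute (bcθ1 p) (bcθ2 q) := fun p q =>
  bcU.commute_of_parts _ _ (bcθ1_h p) (bcθ2_g q)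

/-- The combined homomorphism `F = Π₁ × Π₂ → U`. -/
def bcΘ : bcF →* bcU := MonoidHom.noncommCoprod bcθ1 bcθ2 bcθ_commute

section Class2
variable {G : Type*} [Group G]

theorem bc_swap (a b : G) : a * b = ⁅a, b⁆ * (b * a) := by group

theorem c2_mul_left (hc : ∀ x y z : G, Commute ⁅x, y⁆ z) (x y z : G) :
    ⁅x * y, z⁆ = ⁅x, z⁆ * ⁅y, z⁆ := by
  calc ⁅x * y, z⁆ = x * ⁅y, z⁆ * x⁻¹ * ⁅x, z⁆ := by group
    _ = ⁅y, z⁆ * x * x⁻¹ * ⁅x, z⁆ := by rw [← (hc y z x).eq]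
    _ = ⁅y, z⁆ * ⁅x, z⁆ := by group
    _ = ⁅x, z⁆ * ⁅y, z⁆ := (hc y z ⁅x, z⁆).eq

theorem c2_mul_right (hc : ∀ x y z : G, Commute ⁅x, y⁆ z) (x y z : G) :
    ⁅x, y * z⁆ = ⁅x, y⁆ * ⁅x, z⁆ := by
  calc ⁅x, y * z⁆ = ⁅x, y⁆ * (y * ⁅x, z⁆ * y⁻¹) := by group
    _ = ⁅x, y⁆ * (⁅x, z⁆ * y * y⁻¹) := by rw [← (hc x z y).eq]
    _ = ⁅x, y⁆ * ⁅x, z⁆ := by group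

theorem c2_sq_mul (hc : ∀ x y z : G, Commute ⁅x, y⁆ z) (a b : G) :
    (a * b) ^ 2 = ⁅b, a⁆ * a ^ 2 * b ^ 2 := by
  calc (a * b) ^ 2 = a * (b * a) * b := by rw [pow_two]; group
    _ = a * (⁅b, a⁆ * (a * b)) * b := by rw [bc_swap b a]
    _ = a * ⁅b, a⁆ * (a * b * b) := by group
    _ = ⁅b, a⁆ * a * (a * b * b) := by rw [← (hc b a a).eq]
    _ = ⁅b, a⁆ * a ^ 2 * b ^ 2 := by rw [pow_two, pow_two]; group

theorem c2_inv_left (hc : ∀ x y z : G, Commute ⁅x, y⁆ z) (x y : G) :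
    ⁅x⁻¹, y⁆ = ⁅x, y⁆⁻¹ := by
  have h1 := c2_mul_left hc x⁻¹ x y
  rw [inv_mul_cancel, commutatorElement_one_left] at h1
  exact eq_inv_of_mul_eq_one_left h1.symm

theorem c2_inv_right (hc : ∀ x y z : G, Commute ⁅x, y⁆ z) (x y : G) :
    ⁅x, y⁻¹⁆ = ⁅x, y⁆⁻¹ := by
  have h1 := c2_mul_right hc x y⁻¹ y
  rw [inv_mul_cancel, commutatorElement_one_right] at h1
  exact eq_inv_of_mul_eq_one_left h1.symm

end Class2

/-! ### relator consequences in the presented groups -/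

theorem pg1_sq (i : Fin 5) : (PresentedGroup.of i : bcP1) * PresentedGroup.of i = 1 := by
  show PresentedGroup.mk bcRels₁ (FreeGroup.of i) * PresentedGroup.mk bcRels₁ (FreeGroup.of i) = 1
  rw [← map_mul, ← pow_two]
  refine (QuotientGroup.eq_one_iff _).mpr (Subgroup.subset_normalClosure ?_)
  fin_cases i <;> simp [bcRels₁]

theorem pg2_sq (j : Fin 6) : (PresentedGroup.of j : bcP2) * PresentedGroup.of j = 1 := by
  show PresentedGroup.mk bcRels₂ (FreeGroup.of j) * PresentedGroup.mk bcRels₂ (FreeGroup.of j) = 1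
  rw [← map_mul, ← pow_two]
  refine (QuotientGroup.eq_one_iff _).mpr (Subgroup.subset_normalClosure ?_)
  fin_cases j <;> simp [bcRels₂]

theorem pg1_prod :
    (PresentedGroup.of 0 * PresentedGroup.of 1 * PresentedGroup.of 2 * PresentedGroup.of 3 *
      PresentedGroup.of 4 : bcP1) = 1 := by
  show PresentedGroup.mk bcRels₁ (FreeGroup.of 0) * PresentedGroup.mk bcRels₁ (FreeGroup.of 1) *
      PresentedGroup.mk bcRels₁ (FreeGroup.of 2) * PresentedGroup.mk bcRels₁ (FreeGroup.of 3) *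
      PresentedGroup.mk bcRels₁ (FreeGroup.of 4) = 1
  rw [← map_mul, ← map_mul, ← map_mul, ← map_mul]
  refine (QuotientGroup.eq_one_iff _).mpr (Subgroup.subset_normalClosure ?_)
  simp [bcRels₁]

theorem pg2_prod :
    (PresentedGroup.of 0 * PresentedGroup.of 1 * PresentedGroup.of 2 * PresentedGroup.of 3 *
      PresentedGroup.of 4 * PresentedGroup.of 5 : bcP2) = 1 := by
  show PresentedGroup.mk bcRels₂ (FreeGroup.of 0) * PresentedGroup.mk bcRels₂ (FreeGroup.of 1) *
      PresentedGroup.mk bcRels₂ (FreeGroup.of 2) * PresentedGroup.mk bcRels₂ (FreeGroup.of 3) *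
      PresentedGroup.mk bcRels₂ (FreeGroup.of 4) * PresentedGroup.mk bcRels₂ (FreeGroup.of 5) = 1
  rw [← map_mul, ← map_mul, ← map_mul, ← map_mul, ← map_mul]
  refine (QuotientGroup.eq_one_iff _).mpr (Subgroup.subset_normalClosure ?_)
  simp [bcRels₂]

/-- homomorphisms out of `bcF` agree if they agree on the generators -/
theorem bcF_hom_ext {H : Type*} [Group H] (f g : bcF →* H)
    (h1 : ∀ i : Fin 5, f (PresentedGroup.of i, 1) = g (PresentedGroup.of i, 1))
    (h2 : ∀ j : Fin 6, f (1, PresentedGroup.of j) = g (1, PresentedGroup.of j)) : f = g := by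
  have e1 : f.comp (MonoidHom.inl bcP1 bcP2) = g.comp (MonoidHom.inl bcP1 bcP2) :=
    PresentedGroup.ext fun i => h1 i
  have e2 : f.comp (MonoidHom.inr bcP1 bcP2) = g.comp (MonoidHom.inr bcP1 bcP2) :=
    PresentedGroup.ext fun j => h2 j
  ext x
  obtain ⟨p, q⟩ := x
  have hx : ((p, q) : bcF) = (p, 1) * (1, q) := by simp
  rw [hx, map_mul, map_mul]
  rw [show f (p, 1) = g (p, 1) from DFunLike.congr_fun e1 p,
    show f (1, q) = g (1, q) from DFunLike.congr_fun e2 q]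

/-! ### the main setup -/

theorem prod_commutator {A B : Type*} [Group A] [Group B] (x y : A × B) :
    ⁅x, y⁆ = (⁅x.1, y.1⁆, ⁅x.2, y.2⁆) := rfl

theorem prod_split {A B : Type*} [Group A] [Group B] (u : A) (v : B) :
    ((u, v) : A × B) = (u, 1) * (1, v) := by simp

/-- The hypotheses on the two homomorphisms. -/
structure BCHyp (φ : bcP1 →* bcG) (ψ : bcP2 →* bcG) : Prop where
  f0 : φ (PresentedGroup.of 0) = Multiplicative.ofAdd (1, 0, 0)
  f1 : φ (PresentedGroup.of 1) = Multiplicative.ofAdd (0, 1, 0)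
  f2 : φ (PresentedGroup.of 2) = Multiplicative.ofAdd (0, 0, 1)
  f3 : φ (PresentedGroup.of 3) = Multiplicative.ofAdd (1, 0, 0)
  f4 : φ (PresentedGroup.of 4) = Multiplicative.ofAdd (0, 1, 1)
  g0 : ψ (PresentedGroup.of 0) = Multiplicative.ofAdd (1, 1, 0)
  g1 : ψ (PresentedGroup.of 1) = Multiplicative.ofAdd (1, 0, 1)
  g2 : ψ (PresentedGroup.of 2) = Multiplicative.ofAdd (1, 1, 1)
  g3 : ψ (PresentedGroup.of 3) = Multiplicative.ofAdd (1, 1, 0)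
  g4 : ψ (PresentedGroup.of 4) = Multiplicative.ofAdd (1, 0, 1)
  g5 : ψ (PresentedGroup.of 5) = Multiplicative.ofAdd (1, 1, 1)

namespace BC

variable (φ : bcP1 →* bcG) (ψ : bcP2 →* bcG)

abbrev χ : bcF →* bcG := φ.comp (MonoidHom.fst bcP1 bcP2) / ψ.comp (MonoidHom.snd bcP1 bcP2)

abbrev K : Subgroup bcF := MonoidHom.ker (χ φ ψ)

abbrev N : Subgroup bcF := ⁅K φ ψ, K φ ψ⁆

abbrev Q : Type := bcF ⧸ N φ ψ

abbrev π : bcF →* Q φ ψ := QuotientGroup.mk' (N φ ψ)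

def qa (i : Fin 5) : Q φ ψ := π φ ψ (PresentedGroup.of i, 1)

def qb (j : Fin 6) : Q φ ψ := π φ ψ (1, PresentedGroup.of j)

abbrev x1 : Q φ ψ := ⁅qa φ ψ 0, qa φ ψ 1⁆

abbrev x2 : Q φ ψ := ⁅qa φ ψ 0, qa φ ψ 2⁆

theorem memK (p : bcP1) (q : bcP2) : ((p, q) : bcF) ∈ K φ ψ ↔ φ p = ψ q := by
  rw [MonoidHom.mem_ker, MonoidHom.div_apply]
  simp only [MonoidHom.comp_apply, MonoidHom.coe_fst, MonoidHom.coe_snd]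
  rw [div_eq_one]

theorem bcG_comm_triv (u v : bcG) : ⁅u, v⁆ = 1 :=
  commutatorElement_eq_one_iff_commute.mpr (mul_comm u v)

theorem pi_one {g : bcF} (hg : g ∈ N φ ψ) : π φ ψ g = 1 :=
  (QuotientGroup.eq_one_iff g).mpr hg

theorem pi_comm (a b : bcF) : ⁅π φ ψ a, π φ ψ b⁆ = π φ ψ ⁅a, b⁆ :=
  (map_commutatorElement _ a b).symm

theorem qa_sq (i : Fin 5) : qa φ ψ i * qa φ ψ i = 1 := by
  rw [show qa φ ψ i * qa φ ψ i
      = π φ ψ ((PresentedGroup.of i * PresentedGroup.of i : bcP1), 1) from by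
    simp only [qa, ← map_mul, Prod.mk_mul_mk, one_mul], pg1_sq i]
  exact map_one _

theorem qb_sq (j : Fin 6) : qb φ ψ j * qb φ ψ j = 1 := by
  rw [show qb φ ψ j * qb φ ψ j
      = π φ ψ (1, (PresentedGroup.of j * PresentedGroup.of j : bcP2)) from by
    simp only [qb, ← map_mul, Prod.mk_mul_mk, one_mul], pg2_sq j]
  exact map_one _

theorem qa_pow (i : Fin 5) : qa φ ψ i ^ 2 = 1 := by rw [pow_two]; exact qa_sq φ ψ i

theorem qa_prod : qa φ ψ 0 * qa φ ψ 1 * qa φ ψ 2 * qa φ ψ 3 * qa φ ψ 4 = 1 := by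
  rw [show qa φ ψ 0 * qa φ ψ 1 * qa φ ψ 2 * qa φ ψ 3 * qa φ ψ 4
      = π φ ψ ((PresentedGroup.of 0 * PresentedGroup.of 1 * PresentedGroup.of 2 *
        PresentedGroup.of 3 * PresentedGroup.of 4 : bcP1), 1) from by
    simp only [qa, ← map_mul, Prod.mk_mul_mk, one_mul], pg1_prod]
  exact map_one _

variable {φ ψ}

theorem psi_sec (h : BCHyp φ ψ) : ∀ g : bcG, ∃ q : bcP2, ψ q = g := by
  have key : ∀ g : bcG, ∃ a b c : ZMod 2,
      (Multiplicative.ofAdd ((1 : ZMod 2), (1 : ZMod 2), (0 : ZMod 2))) ^ a.val *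
      (Multiplicative.ofAdd ((1 : ZMod 2), (0 : ZMod 2), (1 : ZMod 2))) ^ b.val *
      (Multiplicative.ofAdd ((1 : ZMod 2), (1 : ZMod 2), (1 : ZMod 2))) ^ c.val = g := by decide
  intro g
  obtain ⟨a, b, c, habc⟩ := key g
  refine ⟨PresentedGroup.of 0 ^ a.val * PresentedGroup.of 1 ^ b.val *
    PresentedGroup.of 2 ^ c.val, ?_⟩
  rw [map_mul, map_mul, map_pow, map_pow, map_pow, h.g0, h.g1, h.g2]
  exact habc

theorem phi_sec (h : BCHyp φ ψ) : ∀ g : bcG, ∃ p : bcP1, φ p = g := by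
  have key : ∀ g : bcG, ∃ a b c : ZMod 2,
      (Multiplicative.ofAdd ((1 : ZMod 2), (0 : ZMod 2), (0 : ZMod 2))) ^ a.val *
      (Multiplicative.ofAdd ((0 : ZMod 2), (1 : ZMod 2), (0 : ZMod 2))) ^ b.val *
      (Multiplicative.ofAdd ((0 : ZMod 2), (0 : ZMod 2), (1 : ZMod 2))) ^ c.val = g := by decide
  intro g
  obtain ⟨a, b, c, habc⟩ := key g
  refine ⟨PresentedGroup.of 0 ^ a.val * PresentedGroup.of 1 ^ b.val *
    PresentedGroup.of 2 ^ c.val, ?_⟩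
  rw [map_mul, map_mul, map_pow, map_pow, map_pow, h.f0, h.f1, h.f2]
  exact habc

theorem L1 (h : BCHyp φ ψ) (p k : bcP1) (hk : φ k = 1) : ((⁅p, k⁆, 1) : bcF) ∈ N φ ψ := by
  obtain ⟨q, hq⟩ := psi_sec h (φ p)
  have h1 : ((p, q) : bcF) ∈ K φ ψ := (memK φ ψ p q).mpr hq.symm
  have h2 : ((k, 1) : bcF) ∈ K φ ψ := (memK φ ψ k 1).mpr (by rw [hk, map_one])
  have h3 := Subgroup.commutator_mem_commutator h1 h2
  rwa [prod_commutator, show ⁅q, (1 : bcP2)⁆ = 1 from by simp] at h3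

theorem L1' (h : BCHyp φ ψ) (p k : bcP1) (hk : φ k = 1) : ((⁅k, p⁆, 1) : bcF) ∈ N φ ψ := by
  have h3 := (N φ ψ).inv_mem (L1 h p k hk)
  rwa [show ((⁅p, k⁆, 1) : bcF)⁻¹ = ((⁅k, p⁆, 1) : bcF) from by
    simp [Prod.ext_iff, commutatorElement_inv]] at h3

theorem L2 (h : BCHyp φ ψ) (q k : bcP2) (hk : ψ k = 1) : ((1, ⁅q, k⁆) : bcF) ∈ N φ ψ := by
  obtain ⟨p, hp⟩ := phi_sec h (ψ q)
  have h1 : ((p, q) : bcF) ∈ K φ ψ := (memK φ ψ p q).mpr hp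
  have h2 : ((1, k) : bcF) ∈ K φ ψ := (memK φ ψ 1 k).mpr (by rw [hk, map_one])
  have h3 := Subgroup.commutator_mem_commutator h1 h2
  rwa [prod_commutator, show ⁅p, (1 : bcP1)⁆ = 1 from by simp] at h3

theorem L2' (h : BCHyp φ ψ) (q k : bcP2) (hk : ψ k = 1) : ((1, ⁅k, q⁆) : bcF) ∈ N φ ψ := by
  have h3 := (N φ ψ).inv_mem (L2 h q k hk)
  rwa [show ((1, ⁅q, k⁆) : bcF)⁻¹ = ((1, ⁅k, q⁆) : bcF) from by
    simp [Prod.ext_iff, commutatorElement_inv]] at h3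

theorem L3 (p p' : bcP1) (q q' : bcP2) (h1 : φ p = ψ q) (h2 : φ p' = ψ q') :
    ((⁅p, p'⁆, ⁅q, q'⁆) : bcF) ∈ N φ ψ := by
  have h3 := Subgroup.commutator_mem_commutator
    ((memK φ ψ p q).mpr h1) ((memK φ ψ p' q').mpr h2)
  rwa [prod_commutator] at h3

theorem hcc (h : BCHyp φ ψ) : ∀ x y z : Q φ ψ, Commute ⁅x, y⁆ z := by
  intro x y z
  obtain ⟨a, rfl⟩ := QuotientGroup.mk'_surjective (N φ ψ) x
  obtain ⟨b, rfl⟩ := QuotientGroup.mk'_surjective (N φ ψ) y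
  obtain ⟨c, rfl⟩ := QuotientGroup.mk'_surjective (N φ ψ) z
  apply commutatorElement_eq_one_iff_commute.mp
  rw [pi_comm, pi_comm]
  apply pi_one
  rw [show (⁅⁅a, b⁆, c⁆ : bcF) = ((⁅⁅a.1, b.1⁆, c.1⁆, 1) : bcF) * ((1, ⁅⁅a.2, b.2⁆, c.2⁆) : bcF)
    from by rw [← prod_split]; rfl]
  have hf : φ ⁅a.1, b.1⁆ = 1 := by rw [map_commutatorElement]; exact bcG_comm_triv _ _
  have hg : ψ ⁅a.2, b.2⁆ = 1 := by rw [map_commutatorElement]; exact bcG_comm_triv _ _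
  exact (N φ ψ).mul_mem (L1' h c.1 _ hf) (L2' h c.2 _ hg)

theorem hAk (h : BCHyp φ ψ) (x : Q φ ψ) (k : bcP1) (hk : φ k = 1) :
    ⁅x, π φ ψ (k, 1)⁆ = 1 := by
  obtain ⟨f, rfl⟩ := QuotientGroup.mk'_surjective (N φ ψ) x
  rw [pi_comm]
  apply pi_one
  rw [show (⁅f, ((k, 1) : bcF)⁆) = ((⁅f.1, k⁆, 1) : bcF) from by
    rw [prod_commutator]; simp]
  exact L1 h f.1 k hk

theorem hBk (h : BCHyp φ ψ) (x : Q φ ψ) (k : bcP2) (hk : ψ k = 1) :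
    ⁅x, π φ ψ (1, k)⁆ = 1 := by
  obtain ⟨f, rfl⟩ := QuotientGroup.mk'_surjective (N φ ψ) x
  rw [pi_comm]
  apply pi_one
  rw [show (⁅f, ((1, k) : bcF)⁆) = ((1, ⁅f.2, k⁆) : bcF) from by
    rw [prod_commutator]; simp]
  exact L2 h f.2 k hk

theorem hMix (h : BCHyp φ ψ) (p p' : bcP1) (q q' : bcP2)
    (h1 : φ p = ψ q) (h2 : φ p' = ψ q') : ⁅π φ ψ (p, q), π φ ψ (p', q')⁆ = 1 := by
  rw [pi_comm]
  apply pi_one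
  rw [prod_commutator]
  exact L3 p p' q q' h1 h2

theorem crossAB (i : Fin 5) (j : Fin 6) : ⁅qa φ ψ i, qb φ ψ j⁆ = 1 := by
  apply commutatorElement_eq_one_iff_commute.mpr
  have hcm : Commute ((PresentedGroup.of i, 1) : bcF) (1, PresentedGroup.of j) := by
    show _ * _ = _ * _
    simp
  exact hcm.map (π φ ψ)

theorem crossBA (j : Fin 6) (i : Fin 5) : ⁅qb φ ψ j, qa φ ψ i⁆ = 1 := by
  apply commutatorElement_eq_one_iff_commute.mpr
  have hcm : Commute ((1, PresentedGroup.of j) : bcF) (PresentedGroup.of i, 1) := by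
    show _ * _ = _ * _
    simp
  exact hcm.map (π φ ψ)

theorem inv_self {G : Type*} [Group G] (a : G) (ha : a * a = 1) : a⁻¹ = a :=
  inv_eq_of_mul_eq_one_right ha

theorem torR (h : BCHyp φ ψ) (x y : Q φ ψ) (hy : y * y = 1) : ⁅x, y⁆ * ⁅x, y⁆ = 1 := by
  have hh := c2_mul_right (hcc h) x y y
  rw [hy, commutatorElement_one_right] at hh
  exact hh.symm

theorem vx1sq (h : BCHyp φ ψ) : x1 φ ψ * x1 φ ψ = 1 := torR h _ _ (qa_sq φ ψ 1)

theorem vx2sq (h : BCHyp φ ψ) : x2 φ ψ * x2 φ ψ = 1 := torR h _ _ (qa_sq φ ψ 2)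

theorem vx1inv (h : BCHyp φ ψ) : (x1 φ ψ)⁻¹ = x1 φ ψ := inv_self _ (vx1sq h)

theorem vx2inv (h : BCHyp φ ψ) : (x2 φ ψ)⁻¹ = x2 φ ψ := inv_self _ (vx2sq h)

theorem hcomm12 (h : BCHyp φ ψ) : x1 φ ψ * x2 φ ψ = x2 φ ψ * x1 φ ψ :=
  (hcc h (qa φ ψ 0) (qa φ ψ 1) (x2 φ ψ)).eq

theorem vx12sq (h : BCHyp φ ψ) : (x1 φ ψ * x2 φ ψ) * (x1 φ ψ * x2 φ ψ) = 1 := by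
  have e := hcomm12 h
  calc (x1 φ ψ * x2 φ ψ) * (x1 φ ψ * x2 φ ψ)
      = x1 φ ψ * (x2 φ ψ * x1 φ ψ) * x2 φ ψ := by group
    _ = x1 φ ψ * (x1 φ ψ * x2 φ ψ) * x2 φ ψ := by rw [← e]
    _ = (x1 φ ψ * x1 φ ψ) * (x2 φ ψ * x2 φ ψ) := by group
    _ = 1 := by rw [vx1sq h, vx2sq h, one_mul]

theorem vx12inv (h : BCHyp φ ψ) : (x1 φ ψ * x2 φ ψ)⁻¹ = x1 φ ψ * x2 φ ψ :=
  inv_self _ (vx12sq h)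

theorem r03 (h : BCHyp φ ψ) (x : Q φ ψ) : ⁅x, qa φ ψ 0⁆ * ⁅x, qa φ ψ 3⁆ = 1 := by
  have hk : φ (PresentedGroup.of 0 * PresentedGroup.of 3) = 1 := by
    rw [map_mul, h.f0, h.f3]; decide
  have hh := hAk h x _ hk
  rw [show (π φ ψ ((PresentedGroup.of 0 * PresentedGroup.of 3 : bcP1), 1))
      = qa φ ψ 0 * qa φ ψ 3 from by simp only [qa, ← map_mul, Prod.mk_mul_mk, one_mul]] at hh
  rwa [c2_mul_right (hcc h)] at hh

theorem r124 (h : BCHyp φ ψ) (x : Q φ ψ) :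
    ⁅x, qa φ ψ 1⁆ * ⁅x, qa φ ψ 2⁆ * ⁅x, qa φ ψ 4⁆ = 1 := by
  have hk : φ (PresentedGroup.of 1 * PresentedGroup.of 2 * PresentedGroup.of 4) = 1 := by
    rw [map_mul, map_mul, h.f1, h.f2, h.f4]; decide
  have hh := hAk h x _ hk
  rw [show (π φ ψ ((PresentedGroup.of 1 * PresentedGroup.of 2 * PresentedGroup.of 4 : bcP1), 1))
      = qa φ ψ 1 * qa φ ψ 2 * qa φ ψ 4 from by
    simp only [qa, ← map_mul, Prod.mk_mul_mk, one_mul]] at hh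
  rwa [c2_mul_right (hcc h), c2_mul_right (hcc h)] at hh

theorem rb03 (h : BCHyp φ ψ) (x : Q φ ψ) : ⁅x, qb φ ψ 0⁆ * ⁅x, qb φ ψ 3⁆ = 1 := by
  have hk : ψ (PresentedGroup.of 0 * PresentedGroup.of 3) = 1 := by
    rw [map_mul, h.g0, h.g3]; decide
  have hh := hBk h x _ hk
  rw [show (π φ ψ ((1 : bcP1), (PresentedGroup.of 0 * PresentedGroup.of 3 : bcP2)))
      = qb φ ψ 0 * qb φ ψ 3 from by simp only [qb, ← map_mul, Prod.mk_mul_mk, one_mul]] at hh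
  rwa [c2_mul_right (hcc h)] at hh

theorem rb14 (h : BCHyp φ ψ) (x : Q φ ψ) : ⁅x, qb φ ψ 1⁆ * ⁅x, qb φ ψ 4⁆ = 1 := by
  have hk : ψ (PresentedGroup.of 1 * PresentedGroup.of 4) = 1 := by
    rw [map_mul, h.g1, h.g4]; decide
  have hh := hBk h x _ hk
  rw [show (π φ ψ ((1 : bcP1), (PresentedGroup.of 1 * PresentedGroup.of 4 : bcP2)))
      = qb φ ψ 1 * qb φ ψ 4 from by simp only [qb, ← map_mul, Prod.mk_mul_mk, one_mul]] at hh
  rwa [c2_mul_right (hcc h)] at hh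

theorem rb25 (h : BCHyp φ ψ) (x : Q φ ψ) : ⁅x, qb φ ψ 2⁆ * ⁅x, qb φ ψ 5⁆ = 1 := by
  have hk : ψ (PresentedGroup.of 2 * PresentedGroup.of 5) = 1 := by
    rw [map_mul, h.g2, h.g5]; decide
  have hh := hBk h x _ hk
  rw [show (π φ ψ ((1 : bcP1), (PresentedGroup.of 2 * PresentedGroup.of 5 : bcP2)))
      = qb φ ψ 2 * qb φ ψ 5 from by simp only [qb, ← map_mul, Prod.mk_mul_mk, one_mul]] at hh
  rwa [c2_mul_right (hcc h)] at hh

end BC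

namespace BC

variable {φ : bcP1 →* bcG} {ψ : bcP2 →* bcG}

theorem cancel_left {G : Type*} [Group G] {a b : G} (hab : a * b = 1) : b = a⁻¹ :=
  (inv_eq_of_mul_eq_one_right hab).symm

theorem vK03 (h : BCHyp φ ψ) : ⁅qa φ ψ 0, qa φ ψ 3⁆ = 1 := by
  have hh := r03 h (qa φ ψ 0)
  rwa [commutatorElement_self, one_mul] at hh

theorem vK10 : ⁅qa φ ψ 1, qa φ ψ 0⁆ = (x1 φ ψ)⁻¹ := by
  rw [← commutatorElement_inv]

theorem vK20 : ⁅qa φ ψ 2, qa φ ψ 0⁆ = (x2 φ ψ)⁻¹ := by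
  rw [← commutatorElement_inv]

theorem vK13 (h : BCHyp φ ψ) : ⁅qa φ ψ 1, qa φ ψ 3⁆ = x1 φ ψ := by
  have hh := r03 h (qa φ ψ 1)
  rw [vK10] at hh
  have h2 := cancel_left hh
  rwa [inv_inv] at h2

theorem vK23 (h : BCHyp φ ψ) : ⁅qa φ ψ 2, qa φ ψ 3⁆ = x2 φ ψ := by
  have hh := r03 h (qa φ ψ 2)
  rw [vK20] at hh
  have h2 := cancel_left hh
  rwa [inv_inv] at h2

theorem vK04 (h : BCHyp φ ψ) : ⁅qa φ ψ 0, qa φ ψ 4⁆ = x1 φ ψ * x2 φ ψ := by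
  have hh : (x1 φ ψ * x2 φ ψ) * ⁅qa φ ψ 0, qa φ ψ 4⁆ = 1 := r124 h (qa φ ψ 0)
  have h2 := cancel_left hh
  rwa [vx12inv h] at h2

theorem vK40 (h : BCHyp φ ψ) : ⁅qa φ ψ 4, qa φ ψ 0⁆ = x1 φ ψ * x2 φ ψ := by
  rw [← commutatorElement_inv, vK04 h, vx12inv h]

theorem vK43 (h : BCHyp φ ψ) : ⁅qa φ ψ 4, qa φ ψ 3⁆ = x1 φ ψ * x2 φ ψ := by
  have hh := r03 h (qa φ ψ 4)
  rw [vK40 h] at hh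
  have h2 := cancel_left hh
  rwa [vx12inv h] at h2

theorem vK12 (h : BCHyp φ ψ) : ⁅qa φ ψ 1, qa φ ψ 2⁆ = 1 := by
  have hr : qa φ ψ 3 * qa φ ψ 4 = qa φ ψ 2 * (qa φ ψ 1 * qa φ ψ 0) := by
    have h1 : (qa φ ψ 0 * qa φ ψ 1 * qa φ ψ 2) * (qa φ ψ 3 * qa φ ψ 4) = 1 := by
      rw [← qa_prod φ ψ]; group
    have h2 := cancel_left h1
    rw [h2, mul_inv_rev, mul_inv_rev, inv_self _ (qa_sq φ ψ 0), inv_self _ (qa_sq φ ψ 1),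
      inv_self _ (qa_sq φ ψ 2)]
  have hs1 : (qa φ ψ 3 * qa φ ψ 4) ^ 2 = x1 φ ψ * x2 φ ψ := by
    rw [c2_sq_mul (hcc h), vK43 h, qa_pow, qa_pow, mul_one, mul_one]
  have hs2 : (qa φ ψ 2 * (qa φ ψ 1 * qa φ ψ 0)) ^ 2
      = ⁅qa φ ψ 1, qa φ ψ 2⁆ * x2 φ ψ * x1 φ ψ := by
    rw [c2_sq_mul (hcc h) (qa φ ψ 2), c2_mul_left (hcc h),
      c2_sq_mul (hcc h) (qa φ ψ 1) (qa φ ψ 0), qa_pow, qa_pow, qa_pow]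
    group
  have he : ⁅qa φ ψ 1, qa φ ψ 2⁆ * x2 φ ψ * x1 φ ψ = x1 φ ψ * x2 φ ψ := by
    rw [← hs2, ← hr, hs1]
  have hu : ⁅qa φ ψ 1, qa φ ψ 2⁆ = (x1 φ ψ * x2 φ ψ) * (x2 φ ψ * x1 φ ψ)⁻¹ := by
    rw [← he]; group
  rw [hu, ← hcomm12 h]
  group

theorem vK21 (h : BCHyp φ ψ) : ⁅qa φ ψ 2, qa φ ψ 1⁆ = 1 := by
  rw [← commutatorElement_inv, vK12 h, inv_one]

theorem vK14 (h : BCHyp φ ψ) : ⁅qa φ ψ 1, qa φ ψ 4⁆ = 1 := by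
  have hh := r124 h (qa φ ψ 1)
  rwa [commutatorElement_self, one_mul, vK12 h, one_mul] at hh

theorem vK24 (h : BCHyp φ ψ) : ⁅qa φ ψ 2, qa φ ψ 4⁆ = 1 := by
  have hh := r124 h (qa φ ψ 2)
  rwa [vK21 h, commutatorElement_self, one_mul, one_mul] at hh

theorem vK31 (h : BCHyp φ ψ) : ⁅qa φ ψ 3, qa φ ψ 1⁆ = x1 φ ψ := by
  rw [← commutatorElement_inv, vK13 h, vx1inv h]

theorem vK32 (h : BCHyp φ ψ) : ⁅qa φ ψ 3, qa φ ψ 2⁆ = x2 φ ψ := by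
  rw [← commutatorElement_inv, vK23 h, vx2inv h]

theorem vK34 (h : BCHyp φ ψ) : ⁅qa φ ψ 3, qa φ ψ 4⁆ = x1 φ ψ * x2 φ ψ := by
  have hh := r124 h (qa φ ψ 3)
  rw [vK31 h, vK32 h] at hh
  have h2 := cancel_left hh
  rwa [vx12inv h] at h2

end BC

namespace BC

variable {φ : bcP1 →* bcG} {ψ : bcP2 →* bcG}

theorem vM12 (h : BCHyp φ ψ) : ⁅qb φ ψ 1, qb φ ψ 2⁆ = x1 φ ψ := by
  have c1 : φ (PresentedGroup.of 0 * PresentedGroup.of 2) = ψ (PresentedGroup.of 1) := by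
    rw [map_mul, h.f0, h.f2, h.g1]; decide
  have c2 : φ (PresentedGroup.of 0 * PresentedGroup.of 4) = ψ (PresentedGroup.of 2) := by
    rw [map_mul, h.f0, h.f4, h.g2]; decide
  have hh := hMix h _ _ _ _ c1 c2
  rw [show (π φ ψ ((PresentedGroup.of 0 * PresentedGroup.of 2 : bcP1), PresentedGroup.of 1))
      = qa φ ψ 0 * qa φ ψ 2 * qb φ ψ 1 from by
    simp only [qa, qb, ← map_mul, Prod.mk_mul_mk, one_mul, mul_one],
    show (π φ ψ ((PresentedGroup.of 0 * PresentedGroup.of 4 : bcP1), PresentedGroup.of 2))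
      = qa φ ψ 0 * qa φ ψ 4 * qb φ ψ 2 from by
    simp only [qa, qb, ← map_mul, Prod.mk_mul_mk, one_mul, mul_one]] at hh
  simp only [c2_mul_left (hcc h), c2_mul_right (hcc h), crossAB, crossBA,
    commutatorElement_self, one_mul, mul_one] at hh
  rw [vK04 h, vK20, vK24 h, mul_one] at hh
  have h2 := cancel_left hh
  rw [h2, show (x1 φ ψ * x2 φ ψ * (x2 φ ψ)⁻¹)⁻¹ = (x1 φ ψ)⁻¹ from by group, vx1inv h]

theorem vM01 (h : BCHyp φ ψ) : ⁅qb φ ψ 0, qb φ ψ 1⁆ = x1 φ ψ * x2 φ ψ := by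
  have c1 : φ (PresentedGroup.of 0 * PresentedGroup.of 1) = ψ (PresentedGroup.of 0) := by
    rw [map_mul, h.f0, h.f1, h.g0]; decide
  have c2 : φ (PresentedGroup.of 0 * PresentedGroup.of 2) = ψ (PresentedGroup.of 1) := by
    rw [map_mul, h.f0, h.f2, h.g1]; decide
  have hh := hMix h _ _ _ _ c1 c2
  rw [show (π φ ψ ((PresentedGroup.of 0 * PresentedGroup.of 1 : bcP1), PresentedGroup.of 0))
      = qa φ ψ 0 * qa φ ψ 1 * qb φ ψ 0 from by
    simp only [qa, qb, ← map_mul, Prod.mk_mul_mk, one_mul, mul_one],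
    show (π φ ψ ((PresentedGroup.of 0 * PresentedGroup.of 2 : bcP1), PresentedGroup.of 1))
      = qa φ ψ 0 * qa φ ψ 2 * qb φ ψ 1 from by
    simp only [qa, qb, ← map_mul, Prod.mk_mul_mk, one_mul, mul_one]] at hh
  simp only [c2_mul_left (hcc h), c2_mul_right (hcc h), crossAB, crossBA,
    commutatorElement_self, one_mul, mul_one] at hh
  rw [vK10, vK12 h, mul_one] at hh
  have h2 := cancel_left hh
  rw [h2, show (x2 φ ψ * (x1 φ ψ)⁻¹)⁻¹ = x1 φ ψ * (x2 φ ψ)⁻¹ from by group, vx2inv h]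

theorem vM02 (h : BCHyp φ ψ) : ⁅qb φ ψ 0, qb φ ψ 2⁆ = x2 φ ψ := by
  have c1 : φ (PresentedGroup.of 0 * PresentedGroup.of 1) = ψ (PresentedGroup.of 0) := by
    rw [map_mul, h.f0, h.f1, h.g0]; decide
  have c2 : φ (PresentedGroup.of 0 * PresentedGroup.of 4) = ψ (PresentedGroup.of 2) := by
    rw [map_mul, h.f0, h.f4, h.g2]; decide
  have hh := hMix h _ _ _ _ c1 c2
  rw [show (π φ ψ ((PresentedGroup.of 0 * PresentedGroup.of 1 : bcP1), PresentedGroup.of 0))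
      = qa φ ψ 0 * qa φ ψ 1 * qb φ ψ 0 from by
    simp only [qa, qb, ← map_mul, Prod.mk_mul_mk, one_mul, mul_one],
    show (π φ ψ ((PresentedGroup.of 0 * PresentedGroup.of 4 : bcP1), PresentedGroup.of 2))
      = qa φ ψ 0 * qa φ ψ 4 * qb φ ψ 2 from by
    simp only [qa, qb, ← map_mul, Prod.mk_mul_mk, one_mul, mul_one]] at hh
  simp only [c2_mul_left (hcc h), c2_mul_right (hcc h), crossAB, crossBA,
    commutatorElement_self, one_mul, mul_one] at hh
  rw [vK04 h, vK10, vK14 h, mul_one, hcomm12 h] at hh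
  have h2 := cancel_left hh
  rw [h2, show (x2 φ ψ * x1 φ ψ * (x1 φ ψ)⁻¹)⁻¹ = (x2 φ ψ)⁻¹ from by group, vx2inv h]

theorem vM10 (h : BCHyp φ ψ) : ⁅qb φ ψ 1, qb φ ψ 0⁆ = (x1 φ ψ * x2 φ ψ)⁻¹ := by
  rw [← commutatorElement_inv, vM01 h]

theorem vM20 (h : BCHyp φ ψ) : ⁅qb φ ψ 2, qb φ ψ 0⁆ = (x2 φ ψ)⁻¹ := by
  rw [← commutatorElement_inv, vM02 h]

theorem vM21 (h : BCHyp φ ψ) : ⁅qb φ ψ 2, qb φ ψ 1⁆ = (x1 φ ψ)⁻¹ := by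
  rw [← commutatorElement_inv, vM12 h]

theorem vM03 (h : BCHyp φ ψ) : ⁅qb φ ψ 0, qb φ ψ 3⁆ = 1 := by
  have hh := rb03 h (qb φ ψ 0)
  rwa [commutatorElement_self, one_mul] at hh

theorem vM04 (h : BCHyp φ ψ) : ⁅qb φ ψ 0, qb φ ψ 4⁆ = x1 φ ψ * x2 φ ψ := by
  have hh := rb14 h (qb φ ψ 0)
  rw [vM01 h] at hh
  have h2 := cancel_left hh
  rwa [vx12inv h] at h2

theorem vM05 (h : BCHyp φ ψ) : ⁅qb φ ψ 0, qb φ ψ 5⁆ = x2 φ ψ := by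
  have hh := rb25 h (qb φ ψ 0)
  rw [vM02 h] at hh
  have h2 := cancel_left hh
  rwa [vx2inv h] at h2

theorem vM13 (h : BCHyp φ ψ) : ⁅qb φ ψ 1, qb φ ψ 3⁆ = x1 φ ψ * x2 φ ψ := by
  have hh := rb03 h (qb φ ψ 1)
  rw [vM10 h] at hh
  have h2 := cancel_left hh
  rwa [inv_inv] at h2

theorem vM14 (h : BCHyp φ ψ) : ⁅qb φ ψ 1, qb φ ψ 4⁆ = 1 := by
  have hh := rb14 h (qb φ ψ 1)
  rwa [commutatorElement_self, one_mul] at hh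

theorem vM15 (h : BCHyp φ ψ) : ⁅qb φ ψ 1, qb φ ψ 5⁆ = x1 φ ψ := by
  have hh := rb25 h (qb φ ψ 1)
  rw [vM12 h] at hh
  have h2 := cancel_left hh
  rwa [vx1inv h] at h2

theorem vM23 (h : BCHyp φ ψ) : ⁅qb φ ψ 2, qb φ ψ 3⁆ = x2 φ ψ := by
  have hh := rb03 h (qb φ ψ 2)
  rw [vM20 h] at hh
  have h2 := cancel_left hh
  rwa [inv_inv] at h2

theorem vM24 (h : BCHyp φ ψ) : ⁅qb φ ψ 2, qb φ ψ 4⁆ = x1 φ ψ := by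
  have hh := rb14 h (qb φ ψ 2)
  rw [vM21 h] at hh
  have h2 := cancel_left hh
  rwa [inv_inv] at h2

theorem vM25 (h : BCHyp φ ψ) : ⁅qb φ ψ 2, qb φ ψ 5⁆ = 1 := by
  have hh := rb25 h (qb φ ψ 2)
  rwa [commutatorElement_self, one_mul] at hh

theorem vM34 (h : BCHyp φ ψ) : ⁅qb φ ψ 3, qb φ ψ 4⁆ = x1 φ ψ * x2 φ ψ := by
  have hh := rb14 h (qb φ ψ 3)
  rw [show ⁅qb φ ψ 3, qb φ ψ 1⁆ = (x1 φ ψ * x2 φ ψ)⁻¹ from by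
    rw [← commutatorElement_inv, vM13 h]] at hh
  have h2 := cancel_left hh
  rwa [inv_inv] at h2

theorem vM35 (h : BCHyp φ ψ) : ⁅qb φ ψ 3, qb φ ψ 5⁆ = x2 φ ψ := by
  have hh := rb25 h (qb φ ψ 3)
  rw [show ⁅qb φ ψ 3, qb φ ψ 2⁆ = (x2 φ ψ)⁻¹ from by
    rw [← commutatorElement_inv, vM23 h]] at hh
  have h2 := cancel_left hh
  rwa [inv_inv] at h2

theorem vM45 (h : BCHyp φ ψ) : ⁅qb φ ψ 4, qb φ ψ 5⁆ = x1 φ ψ := by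
  have hh := rb25 h (qb φ ψ 4)
  rw [show ⁅qb φ ψ 4, qb φ ψ 2⁆ = (x1 φ ψ)⁻¹ from by
    rw [← commutatorElement_inv, vM24 h]] at hh
  have h2 := cancel_left hh
  rwa [inv_inv] at h2

end BC

namespace BC

variable {φ : bcP1 →* bcG} {ψ : bcP2 →* bcG}

theorem vK30 (h : BCHyp φ ψ) : ⁅qa φ ψ 3, qa φ ψ 0⁆ = 1 := by
  rw [← commutatorElement_inv, vK03 h, inv_one]

theorem vK41 (h : BCHyp φ ψ) : ⁅qa φ ψ 4, qa φ ψ 1⁆ = 1 := by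
  rw [← commutatorElement_inv, vK14 h, inv_one]

theorem vK42 (h : BCHyp φ ψ) : ⁅qa φ ψ 4, qa φ ψ 2⁆ = 1 := by
  rw [← commutatorElement_inv, vK24 h, inv_one]

theorem vM30 (h : BCHyp φ ψ) : ⁅qb φ ψ 3, qb φ ψ 0⁆ = 1 := by
  rw [← commutatorElement_inv, vM03 h, inv_one]

theorem vM41 (h : BCHyp φ ψ) : ⁅qb φ ψ 4, qb φ ψ 1⁆ = 1 := by
  rw [← commutatorElement_inv, vM14 h, inv_one]

theorem vM52 (h : BCHyp φ ψ) : ⁅qb φ ψ 5, qb φ ψ 2⁆ = 1 := by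
  rw [← commutatorElement_inv, vM25 h, inv_one]

theorem vM40 (h : BCHyp φ ψ) : ⁅qb φ ψ 4, qb φ ψ 0⁆ = (x1 φ ψ * x2 φ ψ)⁻¹ := by
  rw [← commutatorElement_inv, vM04 h]

theorem vM50 (h : BCHyp φ ψ) : ⁅qb φ ψ 5, qb φ ψ 0⁆ = (x2 φ ψ)⁻¹ := by
  rw [← commutatorElement_inv, vM05 h]

theorem vM31 (h : BCHyp φ ψ) : ⁅qb φ ψ 3, qb φ ψ 1⁆ = (x1 φ ψ * x2 φ ψ)⁻¹ := by
  rw [← commutatorElement_inv, vM13 h]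

theorem vM51 (h : BCHyp φ ψ) : ⁅qb φ ψ 5, qb φ ψ 1⁆ = (x1 φ ψ)⁻¹ := by
  rw [← commutatorElement_inv, vM15 h]

theorem vM32 (h : BCHyp φ ψ) : ⁅qb φ ψ 3, qb φ ψ 2⁆ = (x2 φ ψ)⁻¹ := by
  rw [← commutatorElement_inv, vM23 h]

theorem vM42 (h : BCHyp φ ψ) : ⁅qb φ ψ 4, qb φ ψ 2⁆ = (x1 φ ψ)⁻¹ := by
  rw [← commutatorElement_inv, vM24 h]

theorem vM43 (h : BCHyp φ ψ) : ⁅qb φ ψ 4, qb φ ψ 3⁆ = (x1 φ ψ * x2 φ ψ)⁻¹ := by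
  rw [← commutatorElement_inv, vM34 h]

theorem vM53 (h : BCHyp φ ψ) : ⁅qb φ ψ 5, qb φ ψ 3⁆ = (x2 φ ψ)⁻¹ := by
  rw [← commutatorElement_inv, vM35 h]

theorem vM54 (h : BCHyp φ ψ) : ⁅qb φ ψ 5, qb φ ψ 4⁆ = (x1 φ ψ)⁻¹ := by
  rw [← commutatorElement_inv, vM45 h]

/-- the generating set of the quotient -/
abbrev genS : Set (Q φ ψ) := Set.range (qa φ ψ) ∪ Set.range (qb φ ψ)

theorem closure_top : Subgroup.closure (genS (φ := φ) (ψ := ψ)) = ⊤ := by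
  rw [eq_top_iff]
  rintro x -
  obtain ⟨⟨p, q⟩, rfl⟩ := QuotientGroup.mk'_surjective (N φ ψ) x
  have hsplit : π φ ψ (p, q) = π φ ψ (p, 1) * π φ ψ (1, q) := by
    rw [← map_mul]
    congr 1
    simp
  rw [hsplit]
  refine Subgroup.mul_mem _ ?_ ?_
  · have := PresentedGroup.generated_by bcRels₁
      (Subgroup.comap ((π φ ψ).comp (MonoidHom.inl bcP1 bcP2))
        (Subgroup.closure (genS (φ := φ) (ψ := ψ))))
      (fun j => Subgroup.subset_closure (Set.mem_union_left _ ⟨j, rfl⟩)) p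
    simpa using this
  · have := PresentedGroup.generated_by bcRels₂
      (Subgroup.comap ((π φ ψ).comp (MonoidHom.inr bcP1 bcP2))
        (Subgroup.closure (genS (φ := φ) (ψ := ψ))))
      (fun j => Subgroup.subset_closure (Set.mem_union_right _ ⟨j, rfl⟩)) q
    simpa using this

theorem comm_in_W (h : BCHyp φ ψ) (g1 g2 : Q φ ψ) :
    ⁅g1, g2⁆ ∈ Subgroup.closure ({x1 φ ψ, x2 φ ψ} : Set (Q φ ψ)) := by
  have wx1 : x1 φ ψ ∈ Subgroup.closure ({x1 φ ψ, x2 φ ψ} : Set (Q φ ψ)) :=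
    Subgroup.subset_closure (Set.mem_insert _ _)
  have wx2 : x2 φ ψ ∈ Subgroup.closure ({x1 φ ψ, x2 φ ψ} : Set (Q φ ψ)) :=
    Subgroup.subset_closure (Set.mem_insert_of_mem _ rfl)
  have wx12 := Subgroup.mul_mem _ wx1 wx2
  have hg1 : g1 ∈ Subgroup.closure (genS (φ := φ) (ψ := ψ)) := by rw [closure_top]; trivial
  have hg2 : g2 ∈ Subgroup.closure (genS (φ := φ) (ψ := ψ)) := by rw [closure_top]; trivial
  induction hg1, hg2 using Subgroup.closure_induction₂ with
  | mem a b ha hb =>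
    rcases ha with ⟨i, rfl⟩ | ⟨j, rfl⟩
    · rcases hb with ⟨i', rfl⟩ | ⟨j', rfl⟩
      · have hi : i = 0 ∨ i = 1 ∨ i = 2 ∨ i = 3 ∨ i = 4 := by omega
        have hi' : i' = 0 ∨ i' = 1 ∨ i' = 2 ∨ i' = 3 ∨ i' = 4 := by omega
        rcases hi with rfl | rfl | rfl | rfl | rfl <;>
        rcases hi' with rfl | rfl | rfl | rfl | rfl <;>
          (try simp only [commutatorElement_self, vK03 h, vK30 h, vK10, vK20, vK13 h, vK23 h,
            vK04 h, vK40 h, vK43 h, vK34 h, vK12 h, vK21 h, vK14 h, vK41 h, vK24 h, vK42 h,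
            vK31 h, vK32 h]) <;>
          first
            | exact Subgroup.one_mem _
            | exact wx1
            | exact wx2
            | exact wx12
            | exact Subgroup.inv_mem _ wx1
            | exact Subgroup.inv_mem _ wx2
            | exact Subgroup.inv_mem _ wx12
      · rw [crossAB]; exact Subgroup.one_mem _
    · rcases hb with ⟨i', rfl⟩ | ⟨j', rfl⟩
      · rw [crossBA]; exact Subgroup.one_mem _
      · have hj : j = 0 ∨ j = 1 ∨ j = 2 ∨ j = 3 ∨ j = 4 ∨ j = 5 := by omega
        have hj' : j' = 0 ∨ j' = 1 ∨ j' = 2 ∨ j' = 3 ∨ j' = 4 ∨ j' = 5 := by omega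
        rcases hj with rfl | rfl | rfl | rfl | rfl | rfl <;>
        rcases hj' with rfl | rfl | rfl | rfl | rfl | rfl <;>
          (try simp only [commutatorElement_self, vM01 h, vM02 h, vM12 h, vM10 h, vM20 h, vM21 h,
            vM03 h, vM04 h, vM05 h, vM13 h, vM14 h, vM15 h, vM23 h, vM24 h, vM25 h,
            vM34 h, vM35 h, vM45 h, vM30 h, vM40 h, vM50 h, vM31 h, vM41 h, vM51 h,
            vM32 h, vM42 h, vM52 h, vM43 h, vM53 h, vM54 h]) <;>
          first
            | exact Subgroup.one_mem _
            | exact wx1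
            | exact wx2
            | exact wx12
            | exact Subgroup.inv_mem _ wx1
            | exact Subgroup.inv_mem _ wx2
            | exact Subgroup.inv_mem _ wx12
  | one_left b hb => rw [commutatorElement_one_left]; exact Subgroup.one_mem _
  | one_right a ha => rw [commutatorElement_one_right]; exact Subgroup.one_mem _
  | mul_left a b c ha hb hc' iha ihb =>
    rw [c2_mul_left (hcc h)]; exact Subgroup.mul_mem _ iha ihb
  | mul_right a b c ha hb hc' iha ihb =>
    rw [c2_mul_right (hcc h)]; exact Subgroup.mul_mem _ iha ihb
  | inv_left a b ha hb iha =>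
    rw [c2_inv_left (hcc h)]; exact Subgroup.inv_mem _ iha
  | inv_right a b ha hb iha =>
    rw [c2_inv_right (hcc h)]; exact Subgroup.inv_mem _ iha

end BC

namespace BC

variable {φ : bcP1 →* bcG} {ψ : bcP2 →* bcG}

theorem theta_qa (i : Fin 5) : bcΘ ((PresentedGroup.of i : bcP1), (1 : bcP2)) = bcAImg i := by
  show bcθ1 (PresentedGroup.of i) * bcθ2 1 = bcAImg i
  rw [map_one, mul_one]
  exact PresentedGroup.toGroup.of _

theorem theta_qb (j : Fin 6) : bcΘ ((1 : bcP1), (PresentedGroup.of j : bcP2)) = bcBImg j := by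
  show bcθ1 1 * bcθ2 (PresentedGroup.of j) = bcBImg j
  rw [map_one, one_mul]
  exact PresentedGroup.toGroup.of _

theorem compG_theta (h : BCHyp φ ψ) :
    bcU.compG.comp bcΘ = φ.comp (MonoidHom.fst bcP1 bcP2) := by
  apply bcF_hom_ext
  · intro i
    rw [MonoidHom.comp_apply, MonoidHom.comp_apply, theta_qa i]
    have hi : i = 0 ∨ i = 1 ∨ i = 2 ∨ i = 3 ∨ i = 4 := by omega
    rcases hi with rfl | rfl | rfl | rfl | rfl
    · show _ = φ (PresentedGroup.of 0); rw [h.f0]; decide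
    · show _ = φ (PresentedGroup.of 1); rw [h.f1]; decide
    · show _ = φ (PresentedGroup.of 2); rw [h.f2]; decide
    · show _ = φ (PresentedGroup.of 3); rw [h.f3]; decide
    · show _ = φ (PresentedGroup.of 4); rw [h.f4]; decide
  · intro j
    rw [MonoidHom.comp_apply, MonoidHom.comp_apply, theta_qb j]
    show _ = φ 1
    rw [map_one]
    fin_cases j <;> decide

theorem compH_theta (h : BCHyp φ ψ) :
    bcU.compH.comp bcΘ = ψ.comp (MonoidHom.snd bcP1 bcP2) := by
  apply bcF_hom_ext
  · intro i
    rw [MonoidHom.comp_apply, MonoidHom.comp_apply, theta_qa i]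
    show _ = ψ 1
    rw [map_one]
    fin_cases i <;> decide
  · intro j
    rw [MonoidHom.comp_apply, MonoidHom.comp_apply, theta_qb j]
    have hj : j = 0 ∨ j = 1 ∨ j = 2 ∨ j = 3 ∨ j = 4 ∨ j = 5 := by omega
    rcases hj with rfl | rfl | rfl | rfl | rfl | rfl
    · show _ = ψ (PresentedGroup.of 0); rw [h.g0]; decide
    · show _ = ψ (PresentedGroup.of 1); rw [h.g1]; decide
    · show _ = ψ (PresentedGroup.of 2); rw [h.g2]; decide
    · show _ = ψ (PresentedGroup.of 3); rw [h.g3]; decide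
    · show _ = ψ (PresentedGroup.of 4); rw [h.g4]; decide
    · show _ = ψ (PresentedGroup.of 5); rw [h.g5]; decide

theorem theta_parts (h : BCHyp φ ψ) {f : bcF} (hf : f ∈ K φ ψ) :
    (bcΘ f).2.1 = (bcΘ f).2.2 := by
  have h1 : Multiplicative.ofAdd (bcΘ f).2.1 = φ f.1 := DFunLike.congr_fun (compG_theta h) f
  have h2 : Multiplicative.ofAdd (bcΘ f).2.2 = ψ f.2 := DFunLike.congr_fun (compH_theta h) f
  have h3 : φ f.1 = ψ f.2 := by
    have := (memK φ ψ f.1 f.2).mp (by rwa [Prod.mk.eta])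
    exact this
  exact Multiplicative.ofAdd.injective (by rw [h1, h2, h3])

theorem ker_theta (h : BCHyp φ ψ) : N φ ψ ≤ MonoidHom.ker bcΘ := by
  apply Subgroup.commutator_le.mpr
  intro f hf g hg
  rw [MonoidHom.mem_ker, map_commutatorElement]
  exact bcU.commutator_eq_one _ _ (theta_parts h hf) (theta_parts h hg)

/-- the lifted homomorphism on the quotient -/
def Θq (h : BCHyp φ ψ) : Q φ ψ →* bcU :=
  QuotientGroup.lift (N φ ψ) bcΘ (ker_theta h)

theorem Θq_mk (h : BCHyp φ ψ) (f : bcF) : Θq h (π φ ψ f) = bcΘ f := rfl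

theorem Θq_qa (h : BCHyp φ ψ) (i : Fin 5) : Θq h (qa φ ψ i) = bcAImg i := theta_qa i

theorem Θq_x1 (h : BCHyp φ ψ) :
    Θq h (x1 φ ψ) = (((1 : ZMod 2), (0 : ZMod 2)), (0 : bcV3), (0 : bcV3)) := by
  show Θq h ⁅qa φ ψ 0, qa φ ψ 1⁆ = _
  rw [map_commutatorElement, Θq_qa h, Θq_qa h]
  rfl

theorem Θq_x2 (h : BCHyp φ ψ) :
    Θq h (x2 φ ψ) = (((0 : ZMod 2), (1 : ZMod 2)), (0 : bcV3), (0 : bcV3)) := by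
  show Θq h ⁅qa φ ψ 0, qa φ ψ 2⁆ = _
  rw [map_commutatorElement, Θq_qa h, Θq_qa h]
  rfl

theorem theta_comm_parts (u : bcF) (hu : u ∈ ⁅(⊤ : Subgroup bcF), (⊤ : Subgroup bcF)⁆) :
    (bcΘ u).2.1 = 0 ∧ (bcΘ u).2.2 = 0 := by
  have hG : ⁅(⊤ : Subgroup bcF), (⊤ : Subgroup bcF)⁆ ≤ MonoidHom.ker (bcU.compG.comp bcΘ) := by
    apply Subgroup.commutator_le.mpr
    intro a _ b _
    rw [MonoidHom.mem_ker, map_commutatorElement]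
    exact commutatorElement_eq_one_iff_commute.mpr (mul_comm _ _)
  have hH : ⁅(⊤ : Subgroup bcF), (⊤ : Subgroup bcF)⁆ ≤ MonoidHom.ker (bcU.compH.comp bcΘ) := by
    apply Subgroup.commutator_le.mpr
    intro a _ b _
    rw [MonoidHom.mem_ker, map_commutatorElement]
    exact commutatorElement_eq_one_iff_commute.mpr (mul_comm _ _)
  constructor
  · have := hG hu
    rw [MonoidHom.mem_ker] at this
    exact Multiplicative.ofAdd.injective this
  · have := hH hu
    rw [MonoidHom.mem_ker] at this
    exact Multiplicative.ofAdd.injective this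

theorem Wfour (h : BCHyp φ ψ) :
    ∀ v ∈ Subgroup.closure ({x1 φ ψ, x2 φ ψ} : Set (Q φ ψ)),
      v = 1 ∨ v = x1 φ ψ ∨ v = x2 φ ψ ∨ v = x1 φ ψ * x2 φ ψ := by
  intro v hv
  induction hv using Subgroup.closure_induction with
  | mem y hy =>
    rcases hy with rfl | hy
    · right; left; rfl
    · rw [Set.mem_singleton_iff] at hy
      subst hy
      right; right; left; rfl
  | one => left; rfl
  | mul a b ha hb iha ihb =>
    rcases iha with rfl | rfl | rfl | rfl <;> rcases ihb with rfl | rfl | rfl | rfl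
    · left; rw [one_mul]
    · right; left; rw [one_mul]
    · right; right; left; rw [one_mul]
    · right; right; right; rw [one_mul]
    · right; left; rw [mul_one]
    · left; exact vx1sq h
    · right; right; right; rfl
    · right; right; left; rw [← mul_assoc, vx1sq h, one_mul]
    · right; right; left; rw [mul_one]
    · right; right; right; exact (hcomm12 h).symm
    · left; exact vx2sq h
    · right; left; rw [← mul_assoc, ← hcomm12 h, mul_assoc, vx2sq h, mul_one]
    · right; right; right; rw [mul_one]
    · right; right; left; rw [mul_assoc, ← hcomm12 h, ← mul_assoc, vx1sq h, one_mul]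
    · right; left; rw [mul_assoc, vx2sq h, mul_one]
    · left; exact vx12sq h
  | inv a ha iha =>
    rcases iha with rfl | rfl | rfl | rfl
    · left; exact inv_one
    · right; left; exact vx1inv h
    · right; right; left; exact vx2inv h
    · right; right; right; exact vx12inv h

end BC

theorem bcB1_zero_left : ∀ v : bcV3, bcB1 0 v = 0 := by decide

theorem bcB2_zero_left : ∀ v : bcV3, bcB2 0 v = 0 := by decide

namespace BC

variable {φ : bcP1 →* bcG} {ψ : bcP2 →* bcG}

theorem main (h : BCHyp φ ψ) :
    Nonempty ((Subgroup.map (QuotientGroup.mk' (N φ ψ))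
      ⁅(⊤ : Subgroup bcF), (⊤ : Subgroup bcF)⁆) ≃* Multiplicative bcZ2) := by
  set V : Subgroup (Q φ ψ) := Subgroup.map (QuotientGroup.mk' (N φ ψ))
    ⁅(⊤ : Subgroup bcF), (⊤ : Subgroup bcF)⁆ with hVdef
  have hx1V : x1 φ ψ ∈ V :=
    ⟨⁅((PresentedGroup.of 0 : bcP1), (1 : bcP2)), ((PresentedGroup.of 1 : bcP1), (1 : bcP2))⁆,
      Subgroup.commutator_mem_commutator trivial trivial,
      by rw [map_commutatorElement]; rfl⟩
  have hx2V : x2 φ ψ ∈ V :=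
    ⟨⁅((PresentedGroup.of 0 : bcP1), (1 : bcP2)), ((PresentedGroup.of 2 : bcP1), (1 : bcP2))⁆,
      Subgroup.commutator_mem_commutator trivial trivial,
      by rw [map_commutatorElement]; rfl⟩
  have hVle : ∀ v ∈ V, v ∈ Subgroup.closure ({x1 φ ψ, x2 φ ψ} : Set (Q φ ψ)) := by
    have e1 : V = ⁅(⊤ : Subgroup (Q φ ψ)), (⊤ : Subgroup (Q φ ψ))⁆ := by
      rw [hVdef, Subgroup.map_commutator,
        Subgroup.map_top_of_surjective _ (QuotientGroup.mk'_surjective _)]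
    intro v hv
    rw [e1] at hv
    exact Subgroup.commutator_le.mpr (fun a _ b _ => comm_in_W h a b) hv
  have hfour : ∀ v ∈ V, v = 1 ∨ v = x1 φ ψ ∨ v = x2 φ ψ ∨ v = x1 φ ψ * x2 φ ψ :=
    fun v hv => Wfour h v (hVle v hv)
  have hcompv : ∀ v ∈ V, (Θq h v).2.1 = 0 ∧ (Θq h v).2.2 = 0 := by
    rintro v ⟨u, hu, rfl⟩
    exact theta_comm_parts u hu
  have hT0 : (Θq h (1 : Q φ ψ)).1 = ((0 : ZMod 2), (0 : ZMod 2)) := by rw [map_one]; rfl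
  have hT1 : (Θq h (x1 φ ψ)).1 = ((1 : ZMod 2), (0 : ZMod 2)) := by rw [Θq_x1 h]
  have hT2 : (Θq h (x2 φ ψ)).1 = ((0 : ZMod 2), (1 : ZMod 2)) := by rw [Θq_x2 h]
  have hT12 : (Θq h (x1 φ ψ * x2 φ ψ)).1 = ((1 : ZMod 2), (1 : ZMod 2)) := by
    rw [map_mul, Θq_x1 h, Θq_x2 h]; decide
  have hv0 : ((0 : ZMod 2)).val = 0 := rfl
  have hv1 : ((1 : ZMod 2)).val = 1 := rfl
  refine ⟨{
    toFun := fun v => Multiplicative.ofAdd (Θq h (v : Q φ ψ)).1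
    invFun := fun m => ⟨x1 φ ψ ^ (Multiplicative.toAdd m).1.val *
        x2 φ ψ ^ (Multiplicative.toAdd m).2.val,
      Subgroup.mul_mem _ (Subgroup.pow_mem _ hx1V _) (Subgroup.pow_mem _ hx2V _)⟩
    left_inv := ?_
    right_inv := ?_
    map_mul' := ?_ }⟩
  · intro v
    apply Subtype.ext
    rcases hfour v.1 v.2 with h0 | h0 | h0 | h0 <;>
      simp only [h0, hT0, hT1, hT2, hT12, toAdd_ofAdd, hv0, hv1, pow_zero, pow_one,
        one_mul, mul_one]
  · intro m
    have hall : ∀ m' : Multiplicative bcZ2,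
        m' = Multiplicative.ofAdd ((0 : ZMod 2), (0 : ZMod 2)) ∨
        m' = Multiplicative.ofAdd ((1 : ZMod 2), (0 : ZMod 2)) ∨
        m' = Multiplicative.ofAdd ((0 : ZMod 2), (1 : ZMod 2)) ∨
        m' = Multiplicative.ofAdd ((1 : ZMod 2), (1 : ZMod 2)) := by decide
    rcases hall m with rfl | rfl | rfl | rfl <;>
      simp only [toAdd_ofAdd, hv0, hv1, pow_zero, pow_one, one_mul, mul_one] <;>
      simp only [map_one, hT0, hT1, hT2, hT12] <;> rfl
  · intro v w
    obtain ⟨h1a, h1b⟩ := hcompv v.1 v.2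
    obtain ⟨h2a, h2b⟩ := hcompv w.1 w.2
    show Multiplicative.ofAdd (Θq h ((v : Q φ ψ) * (w : Q φ ψ))).1
      = Multiplicative.ofAdd (Θq h (v : Q φ ψ)).1 * Multiplicative.ofAdd (Θq h (w : Q φ ψ)).1
    rw [map_mul]
    have e : (Θq h (v : Q φ ψ) * Θq h (w : Q φ ψ)).1
        = (Θq h (v : Q φ ψ)).1 + (Θq h (w : Q φ ψ)).1 := by
      rw [bcU.mul_def]
      show (Θq h (v : Q φ ψ)).1 + (Θq h (w : Q φ ψ)).1 + _ + _ = _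
      rw [h1a, h1b, h2a, h2b]
      rw [bcB1_zero_left, bcB2_zero_left, add_zero, add_zero]
    rw [e, ofAdd_add]

end BC

/-- Bauer–Catanese case `G = (ℤ/2ℤ)³`. With `F = Π₁ × Π₂` and `K` the
kernel of `(p,q) ↦ φ(p) - ψ(q)`, the quotient `⁅F,F⁆/⁅K,K⁆` (realized as the image
of `⁅F,F⁆` in `F/⁅K,K⁆`) is isomorphic to `(ℤ/2ℤ)²`. -/
theorem bauer_catanese_Z23_commutator_quotient
    (φ : PresentedGroup bcRels₁ →* bcG) (ψ : PresentedGroup bcRels₂ →* bcG)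
    (hφ0 : φ (PresentedGroup.of 0) = Multiplicative.ofAdd (1, 0, 0))
    (hφ1 : φ (PresentedGroup.of 1) = Multiplicative.ofAdd (0, 1, 0))
    (hφ2 : φ (PresentedGroup.of 2) = Multiplicative.ofAdd (0, 0, 1))
    (hφ3 : φ (PresentedGroup.of 3) = Multiplicative.ofAdd (1, 0, 0))
    (hφ4 : φ (PresentedGroup.of 4) = Multiplicative.ofAdd (0, 1, 1))
    (hψ0 : ψ (PresentedGroup.of 0) = Multiplicative.ofAdd (1, 1, 0))
    (hψ1 : ψ (PresentedGroup.of 1) = Multiplicative.ofAdd (1, 0, 1))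
    (hψ2 : ψ (PresentedGroup.of 2) = Multiplicative.ofAdd (1, 1, 1))
    (hψ3 : ψ (PresentedGroup.of 3) = Multiplicative.ofAdd (1, 1, 0))
    (hψ4 : ψ (PresentedGroup.of 4) = Multiplicative.ofAdd (1, 0, 1))
    (hψ5 : ψ (PresentedGroup.of 5) = Multiplicative.ofAdd (1, 1, 1)) :
    Nonempty
      ((Subgroup.map
          (QuotientGroup.mk'
            ⁅MonoidHom.ker
                (φ.comp (MonoidHom.fst (PresentedGroup bcRels₁) (PresentedGroup bcRels₂)) /
                  ψ.comp (MonoidHom.snd (PresentedGroup bcRels₁) (PresentedGroup bcRels₂))),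
              MonoidHom.ker
                (φ.comp (MonoidHom.fst (PresentedGroup bcRels₁) (PresentedGroup bcRels₂)) /
                  ψ.comp (MonoidHom.snd (PresentedGroup bcRels₁) (PresentedGroup bcRels₂)))⁆)
          ⁅(⊤ : Subgroup (PresentedGroup bcRels₁ × PresentedGroup bcRels₂)),
            (⊤ : Subgroup (PresentedGroup bcRels₁ × PresentedGroup bcRels₂))⁆) ≃*
        Multiplicative (ZMod 2 × ZMod 2)) := by
  exact BC.main ⟨hφ0, hφ1, hφ2, hφ3, hφ4, hψ0, hψ1, hψ2, hψ3, hψ4, hψ5⟩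
end
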